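/- arXiv:1510.07885 — 3 statements merged into one kernel-verified Lean document; each statement's English description precedes it below -/
import Mathlib

section
/- Let a ≥ 2 be an integer, let 𝒳 ⊆ {1,…,a}^ℤ be a closed shift-invariant subset with the left shift σ, and let μ be a σ-invariant probability measure on 𝒳 which is ψ-mixing with rates (ψ_Δ). Let U ⊆ 𝒳 be measurable with respect to the coordinates {0,…,n−1} with ε := μ(U). Then for every integer q ≥ 2n+1, | ∫ 1_U · ∏_{i=2n}^{q} 1_{U^c}∘σ^i dμ − ∫ 1_U · ∏_{i=n}^{q} 1_{U^c}∘σ^i dμ | ≤ ε²·( n + Σ_{i=0}^{n−1} ψ_i ). -/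
open MeasureTheory Filter Set ENNReal

noncomputable section

/-- The full shift space on an alphabet with `a` symbols (modeling `{1,…,a}` by `Fin a`). -/
abbrev FullShift (a : ℕ) := ℤ → Fin a

/-- The left shift `(σ x)_k = x_{k+1}`. -/
def shift {a : ℕ} (x : FullShift a) : FullShift a := fun k => x (k + 1)

/-- Entry time to `U`: `τ_U(x) = inf {k ≥ 1 : σ^k x ∈ U}` (`∞` if the orbit never enters `U`). -/
def entryTime {a : ℕ} (U : Set (FullShift a)) (x : FullShift a) : ℕ∞ :=
  ⨅ k ∈ {k : ℕ | 1 ≤ k ∧ shift^[k] x ∈ U}, (k : ℕ∞)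

/-- Minimal return time `η = inf {τ_U(x) : x ∈ U}` (as a natural number; `0` if there is no return). -/
def minReturn {a : ℕ} (U : Set (FullShift a)) : ℕ :=
  sInf {k : ℕ | 1 ≤ k ∧ ∃ x ∈ U, shift^[k] x ∈ U}

/-- The sub-σ-algebra of the product σ-algebra generated by the coordinates in `s ⊆ ℤ`. -/
def coordMS {a : ℕ} (s : Set ℤ) : MeasurableSpace (FullShift a) :=
  MeasurableSpace.comap (fun (x : FullShift a) (i : s) => x (i : ℤ)) inferInstance

/-- `μ` is ψ-mixing with rates `ψ`: `ψ Δ → 0` and for every set `U` measurable w.r.t. the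
coordinates `{0,…,n−1}` and every `V` measurable w.r.t. the nonnegative coordinates,
`|μ(U ∩ σ^{-(Δ+n)}V) − μ(U)μ(V)| ≤ ψ_Δ μ(U) μ(V)`. -/
def PsiMixing {a : ℕ} (μ : Measure (FullShift a)) (ψ : ℕ → ℝ) : Prop :=
  Tendsto ψ atTop (nhds 0) ∧
    ∀ (n Δ : ℕ) (U V : Set (FullShift a)),
      MeasurableSet[coordMS (Ico (0 : ℤ) (n : ℤ))] U →
      MeasurableSet[coordMS {i : ℤ | 0 ≤ i}] V →
      |(μ (U ∩ shift^[Δ + n] ⁻¹' V)).toReal - (μ U).toReal * (μ V).toReal| ≤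
        ψ Δ * (μ U).toReal * (μ V).toReal

lemma measurable_shift {a : ℕ} : Measurable (shift (a := a)) :=
  measurable_pi_lambda _ fun _ => measurable_pi_apply _

lemma coordMS_le {a : ℕ} (s : Set ℤ) : coordMS (a := a) s ≤ MeasurableSpace.pi :=
  Measurable.comap_le (measurable_pi_lambda _ fun _ => measurable_pi_apply _)

lemma coordMS_mono {a : ℕ} {s t : Set ℤ} (h : s ⊆ t) :
    coordMS (a := a) s ≤ coordMS (a := a) t := by
  have heq : (fun (x : FullShift a) (i : s) => x (i : ℤ)) =
      (fun (y : t → Fin a) (i : s) => y ⟨i, h i.2⟩) ∘ (fun x (i : t) => x (i : ℤ)) := rfl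
  rw [coordMS, coordMS, heq, ← MeasurableSpace.comap_comp]
  exact MeasurableSpace.comap_mono
    (Measurable.comap_le (measurable_pi_lambda _ fun _ => measurable_pi_apply _))

lemma prod_indicator_eq {X : Type*} (S : Finset ℕ) (A : ℕ → Set X) (x : X) :
    ∏ i ∈ S, (A i).indicator (fun _ => (1 : ℝ)) x =
      (⋂ i ∈ S, A i).indicator (fun _ => (1 : ℝ)) x := by
  classical
  by_cases h : ∀ i ∈ S, x ∈ A i
  · rw [Finset.prod_eq_one fun i hi => Set.indicator_of_mem (h i hi) _,
      Set.indicator_of_mem (by simpa using h)]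
  · push_neg at h
    obtain ⟨j, hj, hx⟩ := h
    rw [Finset.prod_eq_zero hj (Set.indicator_of_notMem hx _),
      Set.indicator_of_notMem (by simp only [Set.mem_iInter]; push_neg; exact ⟨j, hj, hx⟩)]

lemma integral_U_prod {a : ℕ} (μ : Measure (FullShift a)) [IsProbabilityMeasure μ]
    (U : Set (FullShift a)) (hU : MeasurableSet U) (S : Finset ℕ) :
    (∫ x, U.indicator (fun _ => (1 : ℝ)) x *
        ∏ i ∈ S, (Uᶜ).indicator (fun _ => (1 : ℝ)) (shift^[i] x) ∂μ) =
      (μ (U ∩ ⋂ i ∈ S, shift^[i] ⁻¹' Uᶜ)).toReal := by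
  have hmeas : MeasurableSet (U ∩ ⋂ i ∈ S, shift^[i] ⁻¹' Uᶜ) :=
    hU.inter (MeasurableSet.biInter (S : Set ℕ).to_countable
      fun i _ => (measurable_shift.iterate i) hU.compl)
  have hpt : ∀ x, U.indicator (fun _ => (1 : ℝ)) x *
      ∏ i ∈ S, (Uᶜ).indicator (fun _ => (1 : ℝ)) (shift^[i] x) =
      (U ∩ ⋂ i ∈ S, shift^[i] ⁻¹' Uᶜ).indicator (fun _ => (1 : ℝ)) x := by
    intro x
    have h1 : ∀ i, (Uᶜ).indicator (fun _ => (1 : ℝ)) (shift^[i] x) =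
        (shift^[i] ⁻¹' Uᶜ).indicator (fun _ => (1 : ℝ)) x := fun i => rfl
    simp_rw [h1, prod_indicator_eq]
    by_cases hx : x ∈ U
    · by_cases hx2 : x ∈ ⋂ i ∈ S, shift^[i] ⁻¹' Uᶜ
      · rw [Set.indicator_of_mem hx, Set.indicator_of_mem hx2,
          Set.indicator_of_mem (Set.mem_inter hx hx2)]; ring
      · rw [Set.indicator_of_notMem hx2,
          Set.indicator_of_notMem
            (fun h => hx2 ((Set.mem_inter_iff _ _ _).mp h).2)]; ring
    · rw [Set.indicator_of_notMem hx,
        Set.indicator_of_notMem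
          (fun h => hx ((Set.mem_inter_iff _ _ _).mp h).1)]; ring
  simp_rw [hpt]
  rw [show (fun _ : FullShift a => (1 : ℝ)) = (1 : FullShift a → ℝ) from rfl]
  exact integral_indicator_one hmeas

/-- Inequality (4.5) of the paper. -/
theorem truncated_avoid_bound
    (a : ℕ) (ha : 2 ≤ a)
    (𝒳 : Set (FullShift a)) (h𝒳closed : IsClosed 𝒳) (h𝒳inv : shift ⁻¹' 𝒳 = 𝒳)
    (μ : Measure (FullShift a)) [IsProbabilityMeasure μ] (hμ𝒳 : μ 𝒳 = 1)
    (hinv : MeasurePreserving (shift (a := a)) μ μ)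
    (ψ : ℕ → ℝ) (hmix : PsiMixing μ ψ)
    (n : ℕ) (U : Set (FullShift a))
    (hUmeas : MeasurableSet[coordMS (Ico (0 : ℤ) (n : ℤ))] U)
    (ε : ℝ) (hε : ε = (μ U).toReal) :
    ∀ q : ℕ, 2 * n + 1 ≤ q →
      |(∫ x, U.indicator (fun _ => (1 : ℝ)) x *
            ∏ i ∈ Finset.Icc (2 * n) q, (Uᶜ).indicator (fun _ => (1 : ℝ)) (shift^[i] x) ∂μ) -
          (∫ x, U.indicator (fun _ => (1 : ℝ)) x *
            ∏ i ∈ Finset.Icc n q, (Uᶜ).indicator (fun _ => (1 : ℝ)) (shift^[i] x) ∂μ)| ≤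
        ε ^ 2 * ((n : ℝ) + ∑ i ∈ Finset.range n, ψ i) := by
  intro q hq
  have hU : MeasurableSet U := coordMS_le _ _ hUmeas
  set F₂ : Set (FullShift a) := U ∩ ⋂ i ∈ Finset.Icc (2 * n) q, shift^[i] ⁻¹' Uᶜ with hF₂
  set F₁ : Set (FullShift a) := U ∩ ⋂ i ∈ Finset.Icc n q, shift^[i] ⁻¹' Uᶜ with hF₁
  have hF₁meas : MeasurableSet F₁ :=
    hU.inter (MeasurableSet.biInter ((Finset.Icc n q : Finset ℕ) : Set ℕ).to_countable
      fun i _ => (measurable_shift.iterate i) hU.compl)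
  rw [integral_U_prod μ U hU, integral_U_prod μ U hU]
  -- F₁ ⊆ F₂
  have hIccsub : (Finset.Icc (2 * n) q : Finset ℕ) ⊆ Finset.Icc n q := by
    intro i hi
    simp only [Finset.mem_Icc] at hi ⊢
    exact ⟨le_trans (by omega) hi.1, hi.2⟩
  have h₁₂ : F₁ ⊆ F₂ := by
    intro x hx
    obtain ⟨hxU, hxI⟩ := hx
    exact ⟨hxU, Set.mem_iInter₂.2 fun i hi => Set.mem_iInter₂.1 hxI i (hIccsub hi)⟩
  have hsub : F₂ \ F₁ ⊆ ⋃ i ∈ Finset.Ico n (2 * n), (U ∩ shift^[i] ⁻¹' U) := by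
    intro x hx
    obtain ⟨⟨hxU, hxI2⟩, hxn1⟩ := hx
    have hnot : ¬ x ∈ ⋂ i ∈ Finset.Icc n q, shift^[i] ⁻¹' Uᶜ :=
      fun h => hxn1 ⟨hxU, h⟩
    simp only [Set.mem_iInter, not_forall] at hnot
    obtain ⟨i, hi, hxi⟩ := hnot
    have hiU : shift^[i] x ∈ U := by simpa using hxi
    have hi2 : i < 2 * n := by
      by_contra hcon
      push_neg at hcon
      have : x ∈ shift^[i] ⁻¹' Uᶜ :=
        Set.mem_iInter₂.1 hxI2 i (Finset.mem_Icc.2 ⟨hcon, (Finset.mem_Icc.1 hi).2⟩)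
      exact this hiU
    exact Set.mem_biUnion (Finset.mem_Ico.2 ⟨(Finset.mem_Icc.1 hi).1, hi2⟩) ⟨hxU, hiU⟩
  have mixing : ∀ Δ : ℕ, (μ (U ∩ shift^[Δ + n] ⁻¹' U)).toReal ≤ ε ^ 2 + ψ Δ * ε ^ 2 := by
    intro Δ
    have hUV := hmix.2 n Δ U U hUmeas
      (coordMS_mono (fun i hi => (Set.mem_Ico.1 hi).1) U hUmeas)
    rw [← hε] at hUV
    have h2 := (abs_le.1 hUV).2
    nlinarith [h2]
  -- rewrite |A - B| as measure of the difference set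
  have hmono : (μ F₁).toReal ≤ (μ F₂).toReal :=
    ENNReal.toReal_mono (measure_ne_top μ F₂) (measure_mono h₁₂)
  rw [abs_of_nonneg (sub_nonneg.2 hmono)]
  have hdiff : (μ F₂).toReal - (μ F₁).toReal = (μ (F₂ \ F₁)).toReal := by
    rw [measure_diff h₁₂ hF₁meas.nullMeasurableSet (measure_ne_top μ F₁),
      ENNReal.toReal_sub_of_le (measure_mono h₁₂) (measure_ne_top μ F₂)]
  rw [hdiff]
  have hle1 : (μ (F₂ \ F₁)).toReal ≤
      ∑ i ∈ Finset.Ico n (2 * n), (μ (U ∩ shift^[i] ⁻¹' U)).toReal := by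
    have h1 : μ (F₂ \ F₁) ≤ ∑ i ∈ Finset.Ico n (2 * n), μ (U ∩ shift^[i] ⁻¹' U) :=
      (measure_mono hsub).trans (measure_biUnion_finset_le _ _)
    have h2 : (∑ i ∈ Finset.Ico n (2 * n), μ (U ∩ shift^[i] ⁻¹' U)) ≠ ∞ :=
      ENNReal.sum_ne_top.2 fun i _ => measure_ne_top μ _
    calc (μ (F₂ \ F₁)).toReal ≤
        (∑ i ∈ Finset.Ico n (2 * n), μ (U ∩ shift^[i] ⁻¹' U)).toReal :=
          ENNReal.toReal_mono h2 h1
      _ = ∑ i ∈ Finset.Ico n (2 * n), (μ (U ∩ shift^[i] ⁻¹' U)).toReal :=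
          ENNReal.toReal_sum fun i _ => measure_ne_top μ _
  have hsum : ∑ i ∈ Finset.Ico n (2 * n), (μ (U ∩ shift^[i] ⁻¹' U)).toReal =
      ∑ Δ ∈ Finset.range n, (μ (U ∩ shift^[Δ + n] ⁻¹' U)).toReal := by
    rw [Finset.sum_Ico_eq_sum_range]
    have h2n : 2 * n - n = n := by omega
    rw [h2n]
    exact Finset.sum_congr rfl fun Δ _ => by rw [add_comm n Δ]
  have hfin : ∑ Δ ∈ Finset.range n, (μ (U ∩ shift^[Δ + n] ⁻¹' U)).toReal ≤
      ε ^ 2 * ((n : ℝ) + ∑ i ∈ Finset.range n, ψ i) := by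
    calc ∑ Δ ∈ Finset.range n, (μ (U ∩ shift^[Δ + n] ⁻¹' U)).toReal ≤
        ∑ Δ ∈ Finset.range n, (ε ^ 2 + ψ Δ * ε ^ 2) :=
          Finset.sum_le_sum fun Δ _ => mixing Δ
      _ = ε ^ 2 * ((n : ℝ) + ∑ i ∈ Finset.range n, ψ i) := by
          rw [Finset.sum_add_distrib, Finset.sum_const, Finset.card_range,
            nsmul_eq_mul, ← Finset.sum_mul]
          ring
  linarith [hle1, hfin, le_of_eq hsum]
end
end

section
/- Let a ≥ 2 be an integer, let 𝒳 ⊆ {1,…,a}^ℤ be a closed shift-invariant subset with the left shift σ, and let μ be a σ-invariant probability measure on 𝒳 which is ψ-mixing with rates (ψ_Δ). Let U ⊆ 𝒳 be measurable with respect to the coordinates {0,…,n−1} with ε := μ(U) > 0, whose minimal return time η satisfies η ≥ n, and let τ(x) = inf{k ≥ 1 : σ^k x ∈ U}. Fix t > 0 and set N = ⌊t/ε⌋, and for q ≥ 0 put p_q := (1−ε)^{N−q−1}( μ{τ > q+1} − (1−ε)·μ{τ > q} ). Then S_2(N) := Σ_{q=n}^{N−1} p_q ≤ 4(n+1)(t+1)·ε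 + (t+1)·ψ_n + N·ε²·Σ_{i=0}^{n−1} ψ_i. -/
open MeasureTheory Filter Set ENNReal

noncomputable section

lemma shift_iterate_apply {a : ℕ} (k : ℕ) (x : FullShift a) (j : ℤ) :
    shift^[k] x j = x (j + k) := by
  induction k generalizing x j with
  | zero => simp
  | succ m ih =>
    rw [Function.iterate_succ_apply, ih]
    show x (j + m + 1) = x (j + (m + 1 : ℕ))
    congr 1
    push_cast
    ring

lemma coordMS_le_meas {a : ℕ} {s : Set ℤ} {V : Set (FullShift a)}
    (h : MeasurableSet[coordMS s] V) : MeasurableSet V := by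
  obtain ⟨B, hB, rfl⟩ := MeasurableSpace.measurableSet_comap.mp h
  exact (measurable_pi_lambda _ fun _ => measurable_pi_apply _) hB

lemma shift_cyl {a n : ℕ} {U : Set (FullShift a)}
    (h : MeasurableSet[coordMS (Ico (0 : ℤ) (n : ℤ))] U) (k : ℕ) (s : Set ℤ)
    (hs : ∀ j : ℤ, 0 ≤ j → j < (n : ℤ) → j + (k : ℤ) ∈ s) :
    MeasurableSet[coordMS s] (shift^[k] ⁻¹' U) := by
  obtain ⟨B, hB, rfl⟩ := MeasurableSpace.measurableSet_comap.mp h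
  refine MeasurableSpace.measurableSet_comap.mpr
    ⟨(fun (y : s → Fin a) (i : Ico (0 : ℤ) (n : ℤ)) =>
        y ⟨(i : ℤ) + k, hs i i.2.1 i.2.2⟩) ⁻¹' B, ?_, ?_⟩
  · exact (measurable_pi_lambda _ fun _ => measurable_pi_apply _) hB
  · ext x
    simp only [Set.mem_preimage]
    have hfun : (fun i : Ico (0 : ℤ) (n : ℤ) => x ((i : ℤ) + k))
        = fun i : Ico (0 : ℤ) (n : ℤ) => (shift^[k] x) (i : ℤ) := by
      funext i
      exact (shift_iterate_apply k x i).symm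
    constructor
    · intro hx
      exact (by rwa [hfun] at hx : (fun i : Ico (0 : ℤ) (n : ℤ) => (shift^[k] x) (i : ℤ)) ∈ B)
    · intro hx
      exact (by rwa [← hfun] at hx : (fun i : Ico (0 : ℤ) (n : ℤ) => x ((i : ℤ) + k)) ∈ B)

set_option maxHeartbeats 1000000 in
/-- Lemma 4.5 of the paper: the bound on `S₂(N)`. -/
theorem S2_bound
    (a : ℕ) (ha : 2 ≤ a)
    (𝒳 : Set (FullShift a)) (h𝒳closed : IsClosed 𝒳) (h𝒳inv : shift ⁻¹' 𝒳 = 𝒳)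
    (μ : Measure (FullShift a)) [IsProbabilityMeasure μ] (hμ𝒳 : μ 𝒳 = 1)
    (hinv : MeasurePreserving (shift (a := a)) μ μ)
    (ψ : ℕ → ℝ) (hmix : PsiMixing μ ψ)
    (n : ℕ) (U : Set (FullShift a))
    (hUmeas : MeasurableSet[coordMS (Ico (0 : ℤ) (n : ℤ))] U)
    (ε : ℝ) (hε : ε = (μ U).toReal) (hεpos : 0 < ε)
    (hη : n ≤ minReturn U)
    (t : ℝ) (ht : 0 < t)
    (N : ℕ) (hN : N = ⌊t / ε⌋₊) :
    ∑ q ∈ Finset.Ico n N,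
        (1 - ε) ^ (N - q - 1) *
          ((μ {x | ((q + 1 : ℕ) : ℕ∞) < entryTime U x}).toReal -
            (1 - ε) * (μ {x | (q : ℕ∞) < entryTime U x}).toReal) ≤
      4 * ((n : ℝ) + 1) * (t + 1) * ε + (t + 1) * ψ n +
        (N : ℝ) * ε ^ 2 * ∑ i ∈ Finset.range n, ψ i := by
  classical
  have hUm : MeasurableSet U := coordMS_le_meas hUmeas
  have hne : ∀ s : Set (FullShift a), μ s ≠ ⊤ := fun s => measure_ne_top μ s
  have hmeasit : ∀ k : ℕ, Measurable (shift^[k] : FullShift a → FullShift a) :=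
    fun k => measurable_shift.iterate k
  have hpre : ∀ (k : ℕ) (s : Set (FullShift a)), MeasurableSet s →
      μ (shift^[k] ⁻¹' s) = μ s :=
    fun k s hs => (hinv.iterate k).measure_preimage hs.nullMeasurableSet
  have hmono : ∀ {s u : Set (FullShift a)}, s ⊆ u → (μ s).toReal ≤ (μ u).toReal :=
    fun h => ENNReal.toReal_mono (hne _) (measure_mono h)
  have hone : ∀ s : Set (FullShift a), (μ s).toReal ≤ 1 := by
    intro s
    have h1 : μ s ≤ 1 := prob_le_one
    have := ENNReal.toReal_mono (by simp) h1
    simpa using this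
  have hε1 : ε ≤ 1 := by rw [hε]; exact hone U
  -- U is measurable w.r.t. the nonnegative coordinates
  have hUnn : MeasurableSet[coordMS {i : ℤ | 0 ≤ i}] U := by
    have h := shift_cyl hUmeas 0 {i : ℤ | 0 ≤ i} (by intro j hj0 hjn; simpa using hj0)
    simpa using h
  -- ψ is nonnegative
  have hψ : ∀ Δ, 0 ≤ ψ Δ := by
    intro Δ
    have h := hmix.2 n Δ U Set.univ hUmeas MeasurableSet.univ
    simp only [Set.preimage_univ, Set.inter_univ, measure_univ, ENNReal.toReal_one,
      mul_one, sub_self, abs_zero] at h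
    rw [← hε] at h
    nlinarith
  -- description of the entry-time sets
  have hTgt : ∀ q : ℕ, {x : FullShift a | (q : ℕ∞) < entryTime U x}
      = {x : FullShift a | ∀ k : ℕ, 1 ≤ k → k ≤ q → shift^[k] x ∉ U} := by
    intro q
    ext x
    simp only [Set.mem_setOf_eq, entryTime]
    constructor
    · intro h k hk1 hkq hxU
      have h2 : (⨅ k ∈ {k : ℕ | 1 ≤ k ∧ shift^[k] x ∈ U}, (k : ℕ∞)) ≤ (k : ℕ∞) :=
        iInf₂_le k ⟨hk1, hxU⟩
      have h3 := lt_of_lt_of_le h h2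
      have h4 : q < k := Nat.cast_lt.mp h3
      omega
    · intro h
      have h2 : ((q + 1 : ℕ) : ℕ∞) ≤ ⨅ k ∈ {k : ℕ | 1 ≤ k ∧ shift^[k] x ∈ U}, (k : ℕ∞) := by
        refine le_iInf₂ fun k hk => ?_
        have : q + 1 ≤ k := by
          by_contra hc
          exact h k hk.1 (by omega) hk.2
        exact_mod_cast this
      calc (q : ℕ∞) < ((q + 1 : ℕ) : ℕ∞) := by exact_mod_cast Nat.lt_succ_self q
        _ ≤ _ := h2
  set T : ℕ → Set (FullShift a) :=
    fun q => {x | ∀ k : ℕ, 1 ≤ k → k ≤ q → shift^[k] x ∉ U} with hT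
  have hTmeas : ∀ q, MeasurableSet (T q) := by
    intro q
    have heq : T q = ⋂ (k : ℕ) (_ : 1 ≤ k) (_ : k ≤ q), (shift^[k] ⁻¹' U)ᶜ := by
      ext x; simp [hT]
    rw [heq]
    exact MeasurableSet.iInter fun k => MeasurableSet.iInter fun _ =>
      MeasurableSet.iInter fun _ => ((hmeasit k) hUm).compl
  -- the approximating sets with the last 2n constraints dropped
  set A : ℕ → Set (FullShift a) :=
    fun q => {x | ∀ k : ℕ, k < q - 2 * n → shift^[k] x ∉ U} with hA
  have hAmeas : ∀ q, MeasurableSet (A q) := by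
    intro q
    have heq : A q = ⋂ (k : ℕ) (_ : k < q - 2 * n), (shift^[k] ⁻¹' U)ᶜ := by
      ext x; simp [hA]
    rw [heq]
    exact MeasurableSet.iInter fun k => MeasurableSet.iInter fun _ => ((hmeasit k) hUm).compl
  have hApre : ∀ q : ℕ, shift ⁻¹' (A q)
      = {x : FullShift a | ∀ k : ℕ, 1 ≤ k → k ≤ q - 2 * n → shift^[k] x ∉ U} := by
    intro q
    ext x
    simp only [Set.mem_preimage, hA, Set.mem_setOf_eq]
    constructor
    · intro h k hk1 hk2
      have h5 := h (k - 1) (by omega)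
      rw [← Function.iterate_succ_apply] at h5
      rwa [show (k - 1).succ = k by omega] at h5
    · intro h k hk
      rw [← Function.iterate_succ_apply]
      exact h (k + 1) (by omega) (by omega)
  have hAcoord : ∀ q : ℕ, n ≤ q →
      MeasurableSet[coordMS (Ico (0 : ℤ) ((q - n : ℕ) : ℤ))] (A q) := by
    intro q hq
    have heq : A q = ⋂ (k : ℕ) (_ : k < q - 2 * n), (shift^[k] ⁻¹' U)ᶜ := by
      ext x; simp [hA]
    rw [heq]
    refine MeasurableSet.iInter fun k => MeasurableSet.iInter fun hk => MeasurableSet.compl ?_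
    refine shift_cyl hUmeas k _ ?_
    intro j hj0 hjn
    simp only [Set.mem_Ico]
    omega
  -- mixing lower bound for A q against U with gap n
  have hAlow : ∀ q : ℕ, n ≤ q →
      ε * (μ (A q)).toReal - ψ n * ε ≤ (μ (A q ∩ shift^[q] ⁻¹' U)).toReal := by
    intro q hq
    have h := hmix.2 (q - n) n (A q) U (hAcoord q hq) hUnn
    rw [show n + (q - n) = q from by omega] at h
    rw [← hε] at h
    have h1 := (abs_le.mp h).1
    have h2 : (μ (A q)).toReal ≤ 1 := hone _
    have h3 : 0 ≤ (μ (A q)).toReal := ENNReal.toReal_nonneg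
    nlinarith [mul_nonneg (mul_nonneg (hψ n) hεpos.le) (by linarith : (0:ℝ) ≤ 1 - (μ (A q)).toReal)]
  -- the per-distance correction bound
  set φ : ℕ → ℝ := fun d => if d < n then 0 else (1 + ψ (d - n)) * ε ^ 2 with hφ
  have hφ0 : ∀ d, 0 ≤ φ d := by
    intro d
    simp only [hφ]
    split_ifs
    · exact le_refl 0
    · nlinarith [hψ (d - n), hεpos.le]
  have hcorr1 : ∀ d : ℕ, 1 ≤ d → (μ (U ∩ shift^[d] ⁻¹' U)).toReal ≤ φ d := by
    intro d hd
    by_cases hdn : d < n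
    · have hemp : U ∩ shift^[d] ⁻¹' U = ∅ := by
        rw [Set.eq_empty_iff_forall_notMem]
        rintro x ⟨hx1, hx2⟩
        have hmem : d ∈ {k : ℕ | 1 ≤ k ∧ ∃ x ∈ U, shift^[k] x ∈ U} := ⟨hd, x, hx1, hx2⟩
        have h6 : minReturn U ≤ d := Nat.sInf_le hmem
        omega
      simp [hemp, hφ, hdn]
    · push_neg at hdn
      have h := hmix.2 n (d - n) U U hUmeas hUnn
      rw [show (d - n) + n = d from by omega] at h
      rw [← hε] at h
      have h1 := (abs_le.mp h).2
      simp only [hφ, if_neg (by omega : ¬ d < n)]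
      nlinarith [hψ (d - n)]
  -- sum of ψ over range n is nonneg
  have hsumpsi : 0 ≤ ∑ i ∈ Finset.range n, ψ i := Finset.sum_nonneg fun i _ => hψ i
  set D : ℝ := ((n : ℝ) + 1) * ε ^ 2 + ε ^ 2 * ∑ i ∈ Finset.range n, ψ i + ψ n * ε ^ 2 with hD
  have hD0 : 0 ≤ D := by
    have := hψ n
    have h1 : (0:ℝ) ≤ ((n : ℝ) + 1) * ε ^ 2 := by positivity
    have h2 : (0:ℝ) ≤ ε ^ 2 * ∑ i ∈ Finset.range n, ψ i := by
      exact mul_nonneg (by positivity) hsumpsi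
    have h3 : (0:ℝ) ≤ ψ n * ε ^ 2 := mul_nonneg (hψ n) (by positivity)
    simp only [hD]; linarith
  -- the bound on the Icc sum of φ
  have hIccφ : ∑ d ∈ Finset.Icc 1 (2 * n), φ d ≤ D := by
    have hcong : ∀ d ∈ Finset.Icc 1 (2 * n), φ d
        = if n ≤ d then (1 + ψ (d - n)) * ε ^ 2 else 0 := by
      intro d _
      simp only [hφ]
      split_ifs with h1 h2
      · omega
      · rfl
      · rfl
      · omega
    rw [Finset.sum_congr rfl hcong, ← Finset.sum_filter]
    have hsub : (Finset.Icc 1 (2 * n)).filter (fun d => n ≤ d) ⊆ Finset.Icc n (2 * n) := by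
      intro d hd
      simp only [Finset.mem_filter, Finset.mem_Icc] at hd ⊢
      omega
    have hle1 : ∑ d ∈ (Finset.Icc 1 (2 * n)).filter (fun d => n ≤ d),
        (1 + ψ (d - n)) * ε ^ 2 ≤ ∑ d ∈ Finset.Icc n (2 * n), (1 + ψ (d - n)) * ε ^ 2 := by
      refine Finset.sum_le_sum_of_subset_of_nonneg hsub ?_
      intro d _ _
      nlinarith [hψ (d - n), hεpos.le]
    have hre : ∑ d ∈ Finset.Icc n (2 * n), (1 + ψ (d - n)) * ε ^ 2
        = ∑ i ∈ Finset.range (n + 1), (1 + ψ i) * ε ^ 2 := by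
      refine Finset.sum_nbij' (fun d => d - n) (fun i => i + n) ?_ ?_ ?_ ?_ ?_
      · intro d hd; simp only [Finset.mem_Icc] at hd; simp only [Finset.mem_range]; omega
      · intro i hi; simp only [Finset.mem_range] at hi; simp only [Finset.mem_Icc]; omega
      · intro d hd; simp only [Finset.mem_Icc] at hd; show d - n + n = d; omega
      · intro i hi; simp only [Finset.mem_range] at hi; show i + n - n = i; omega
      · intro d _; rfl
    have hval : ∑ i ∈ Finset.range (n + 1), (1 + ψ i) * ε ^ 2 = D := by
      have : ∑ i ∈ Finset.range (n + 1), (1 + ψ i) * ε ^ 2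
          = ∑ i ∈ Finset.range (n + 1), (ε ^ 2 + ψ i * ε ^ 2) := by
        refine Finset.sum_congr rfl fun i _ => by ring
      rw [this, Finset.sum_add_distrib, Finset.sum_const, Finset.card_range,
        ← Finset.sum_mul, Finset.sum_range_succ]
      simp only [hD]
      push_cast
      ring
    linarith
  -- main per-q estimate
  have key : ∀ q : ℕ, n ≤ q →
      (μ (T (q + 1))).toReal - (1 - ε) * (μ (T q)).toReal ≤ ψ n * ε + D := by
    intro q hq
    set B : Set (FullShift a) := shift^[q + 1] ⁻¹' U with hB
    have hBm : MeasurableSet B := (hmeasit (q + 1)) hUm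
    -- T (q+1) = T q \ B
    have hTsplit : T (q + 1) = T q \ B := by
      ext x
      simp only [hT, Set.mem_setOf_eq, Set.mem_diff, hB, Set.mem_preimage]
      constructor
      · intro h
        exact ⟨fun k hk1 hk2 => h k hk1 (by omega), h (q + 1) (by omega) le_rfl⟩
      · rintro ⟨h1, h2⟩ k hk1 hk2
        by_cases hk : k ≤ q
        · exact h1 k hk1 hk
        · have : k = q + 1 := by omega
          subst this
          exact h2
    have hPsplit : (μ (T q ∩ B)).toReal + (μ (T (q + 1))).toReal = (μ (T q)).toReal := by
      rw [hTsplit, ← ENNReal.toReal_add (hne _) (hne _), measure_inter_add_diff _ hBm]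
    -- T q ⊆ shift⁻¹ (A q), with equal measure for the latter
    have hTA : T q ⊆ shift ⁻¹' (A q) := by
      rw [hApre q]
      intro x hx k hk1 hk2
      exact hx k hk1 (by omega)
    have hμA : μ (shift ⁻¹' (A q)) = μ (A q) :=
      hinv.measure_preimage (hAmeas q).nullMeasurableSet
    -- shift⁻¹ (A q) ∩ B has measure μ (A q ∩ σ^{-q} U)
    have hBshift : B = shift ⁻¹' (shift^[q] ⁻¹' U) := by
      rw [hB, Function.iterate_succ, Set.preimage_comp]
    have hμAB : μ (shift ⁻¹' (A q) ∩ B) = μ (A q ∩ shift^[q] ⁻¹' U) := by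
      rw [hBshift, ← Set.preimage_inter]
      exact hinv.measure_preimage ((hAmeas q).inter ((hmeasit q) hUm)).nullMeasurableSet
    -- the inclusion giving the correction terms
    set K : Finset ℕ := Finset.Icc (q - 2 * n + 1) q with hK
    have hsub : shift ⁻¹' (A q) ∩ B ⊆ (T q ∩ B) ∪ ⋃ k ∈ K, (shift^[k] ⁻¹' U ∩ B) := by
      rintro x ⟨hxA, hxB⟩
      by_cases hxT : x ∈ T q
      · exact Or.inl ⟨hxT, hxB⟩
      · right
        rw [hApre q] at hxA
        simp only [hT, Set.mem_setOf_eq, not_forall] at hxT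
        obtain ⟨k, hk1, hk2, hk3⟩ := hxT
        simp only [Set.mem_iUnion]
        refine ⟨k, ?_, by simpa using hk3, hxB⟩
        simp only [hK, Finset.mem_Icc]
        constructor
        · by_contra hc
          exact (hxA k hk1 (by omega)) (by simpa using hk3)
        · exact hk2
    have hμsub : (μ (shift ⁻¹' (A q) ∩ B)).toReal
        ≤ (μ (T q ∩ B)).toReal + ∑ k ∈ K, (μ (shift^[k] ⁻¹' U ∩ B)).toReal := by
      have h1 : μ (shift ⁻¹' (A q) ∩ B)
          ≤ μ (T q ∩ B) + ∑ k ∈ K, μ (shift^[k] ⁻¹' U ∩ B) := by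
        calc μ (shift ⁻¹' (A q) ∩ B) ≤ μ ((T q ∩ B) ∪ ⋃ k ∈ K, (shift^[k] ⁻¹' U ∩ B)) :=
              measure_mono hsub
          _ ≤ μ (T q ∩ B) + μ (⋃ k ∈ K, (shift^[k] ⁻¹' U ∩ B)) := measure_union_le _ _
          _ ≤ μ (T q ∩ B) + ∑ k ∈ K, μ (shift^[k] ⁻¹' U ∩ B) := by
              exact add_le_add (le_refl _) (measure_biUnion_finset_le K _)
      have h2 : (μ (T q ∩ B) + ∑ k ∈ K, μ (shift^[k] ⁻¹' U ∩ B)) ≠ ⊤ := by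
        refine ENNReal.add_ne_top.mpr ⟨hne _, ?_⟩
        exact (ENNReal.sum_lt_top.mpr fun k _ => (measure_lt_top μ _)).ne
      calc (μ (shift ⁻¹' (A q) ∩ B)).toReal
          ≤ ((μ (T q ∩ B) + ∑ k ∈ K, μ (shift^[k] ⁻¹' U ∩ B))).toReal :=
            ENNReal.toReal_mono h2 h1
        _ = (μ (T q ∩ B)).toReal + ∑ k ∈ K, (μ (shift^[k] ⁻¹' U ∩ B)).toReal := by
            rw [ENNReal.toReal_add (hne _) ((ENNReal.sum_lt_top.mpr
              fun k _ => (measure_lt_top μ _)).ne), ENNReal.toReal_sum (fun k _ => hne _)]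
    -- per-k correction bound
    have hperk : ∀ k ∈ K, (μ (shift^[k] ⁻¹' U ∩ B)).toReal ≤ φ (q + 1 - k) := by
      intro k hk
      simp only [hK, Finset.mem_Icc] at hk
      have hkd : (q + 1 - k) + k = q + 1 := by omega
      have hcomp : ∀ x : FullShift a, shift^[q + 1] x = shift^[q + 1 - k] (shift^[k] x) := by
        intro x
        rw [← Function.iterate_add_apply, show (q + 1 - k) + k = q + 1 by omega]
      have hseteq : shift^[k] ⁻¹' U ∩ B = shift^[k] ⁻¹' (U ∩ shift^[q + 1 - k] ⁻¹' U) := by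
        ext x
        simp only [hB, Set.mem_inter_iff, Set.mem_preimage]
        rw [hcomp x]
      rw [hseteq, hpre k _ (hUm.inter ((hmeasit _) hUm))]
      exact hcorr1 (q + 1 - k) (by omega)
    -- sum of corrections bounded by the Icc sum of φ
    have hcorrsum : ∑ k ∈ K, (μ (shift^[k] ⁻¹' U ∩ B)).toReal ≤ D := by
      have h1 : ∑ k ∈ K, (μ (shift^[k] ⁻¹' U ∩ B)).toReal ≤ ∑ k ∈ K, φ (q + 1 - k) :=
        Finset.sum_le_sum hperk
      have h2 : ∑ k ∈ K, φ (q + 1 - k) = ∑ d ∈ K.image (fun k => q + 1 - k), φ d := by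
        rw [Finset.sum_image]
        intro x hx y hy hxy
        simp only [hK, Finset.coe_Icc, Set.mem_Icc, Finset.mem_Icc] at hx hy
        have hxy' : q + 1 - x = q + 1 - y := hxy
        omega
      have h3 : K.image (fun k => q + 1 - k) ⊆ Finset.Icc 1 (2 * n) := by
        intro d hd
        simp only [Finset.mem_image, hK, Finset.mem_Icc] at hd
        obtain ⟨k, hk, rfl⟩ := hd
        simp only [Finset.mem_Icc]
        omega
      have h4 : ∑ d ∈ K.image (fun k => q + 1 - k), φ d ≤ ∑ d ∈ Finset.Icc 1 (2 * n), φ d :=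
        Finset.sum_le_sum_of_subset_of_nonneg h3 fun d _ _ => hφ0 d
      linarith
    -- assemble
    have e1 : (μ (T q)).toReal ≤ (μ (A q)).toReal := by
      calc (μ (T q)).toReal ≤ (μ (shift ⁻¹' (A q))).toReal := hmono hTA
        _ = (μ (A q)).toReal := by rw [hμA]
    have e2 : ε * (μ (A q)).toReal - ψ n * ε - D ≤ (μ (T q ∩ B)).toReal := by
      have h5 : (μ (shift ⁻¹' (A q) ∩ B)).toReal = (μ (A q ∩ shift^[q] ⁻¹' U)).toReal := by
        rw [hμAB]
      have h6 := hAlow q hq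
      linarith [hμsub, hcorrsum]
    have e3 : (μ (T (q + 1))).toReal - (1 - ε) * (μ (T q)).toReal
        = ε * (μ (T q)).toReal - (μ (T q ∩ B)).toReal := by linarith
    rw [e3]
    have e4 : ε * (μ (T q)).toReal ≤ ε * (μ (A q)).toReal :=
      mul_le_mul_of_nonneg_left e1 hεpos.le
    linarith
  -- rewrite the goal via T
  simp only [hTgt]
  -- bound the geometric weights
  set S : ℝ := ∑ q ∈ Finset.Ico n N, (1 - ε) ^ (N - q - 1) with hS
  have hw0 : ∀ q, (0:ℝ) ≤ (1 - ε) ^ (N - q - 1) := fun q => pow_nonneg (by linarith) _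
  have hS0 : 0 ≤ S := Finset.sum_nonneg fun q _ => hw0 q
  have hSN : S ≤ (N : ℝ) := by
    have h1 : S ≤ ∑ q ∈ Finset.Ico n N, (1:ℝ) :=
      Finset.sum_le_sum fun q _ => pow_le_one₀ (by linarith) (by linarith)
    rw [Finset.sum_const, Nat.card_Ico] at h1
    have h2 : ((N - n : ℕ) : ℝ) ≤ (N : ℝ) := Nat.cast_le.mpr (Nat.sub_le _ _)
    simp only [nsmul_eq_mul, mul_one] at h1
    linarith
  have hSε : S * ε ≤ 1 := by
    have hre : S = ∑ j ∈ Finset.range (N - n), (1 - ε) ^ j := by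
      rw [hS]
      refine Finset.sum_nbij' (fun q => N - q - 1) (fun j => N - j - 1) ?_ ?_ ?_ ?_ ?_
      · intro q hq; simp only [Finset.mem_Ico] at hq; simp only [Finset.mem_range]; omega
      · intro j hj; simp only [Finset.mem_range] at hj; simp only [Finset.mem_Ico]; omega
      · intro q hq; simp only [Finset.mem_Ico] at hq; show N - (N - q - 1) - 1 = q; omega
      · intro j hj; simp only [Finset.mem_range] at hj; show N - (N - j - 1) - 1 = j; omega
      · intro q _; rfl
    have hg := geom_sum_mul (1 - ε) (N - n)
    have hp : (0:ℝ) ≤ (1 - ε) ^ (N - n) := pow_nonneg (by linarith) _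
    rw [hre]
    nlinarith [hg]
  -- N ε ≤ t
  have hNε : (N : ℝ) * ε ≤ t := by
    have h1 : (N : ℝ) ≤ t / ε := by
      rw [hN]
      exact Nat.floor_le (by positivity)
    calc (N : ℝ) * ε ≤ (t / ε) * ε := mul_le_mul_of_nonneg_right h1 hεpos.le
      _ = t := by field_simp
  -- final chain
  calc ∑ q ∈ Finset.Ico n N,
        (1 - ε) ^ (N - q - 1) *
          ((μ (T (q + 1))).toReal - (1 - ε) * (μ (T q)).toReal)
      ≤ ∑ q ∈ Finset.Ico n N, (1 - ε) ^ (N - q - 1) * (ψ n * ε + D) := by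
        refine Finset.sum_le_sum fun q hq => ?_
        have hq' : n ≤ q := (Finset.mem_Ico.mp hq).1
        exact mul_le_mul_of_nonneg_left (key q hq') (hw0 q)
    _ = S * (ψ n * ε + D) := by rw [hS, Finset.sum_mul]
    _ ≤ ψ n + (N : ℝ) * D := by
        have h1 : S * (ψ n * ε) ≤ ψ n := by nlinarith [hψ n]
        have h2 : S * D ≤ (N : ℝ) * D := mul_le_mul_of_nonneg_right hSN hD0
        nlinarith
    _ ≤ 4 * ((n : ℝ) + 1) * (t + 1) * ε + (t + 1) * ψ n +
        (N : ℝ) * ε ^ 2 * ∑ i ∈ Finset.range n, ψ i := by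
        have hN0 : (0:ℝ) ≤ (N : ℝ) := Nat.cast_nonneg N
        have hn0 : (0:ℝ) ≤ (n : ℝ) := Nat.cast_nonneg n
        have q1 : (N : ℝ) * ε * (((n : ℝ) + 1) * ε) ≤ t * (((n : ℝ) + 1) * ε) :=
          mul_le_mul_of_nonneg_right hNε (by positivity)
        have q2 : t * (((n : ℝ) + 1) * ε) ≤ 4 * ((n : ℝ) + 1) * (t + 1) * ε := by
          nlinarith [mul_nonneg (mul_nonneg (by linarith : (0:ℝ) ≤ (n : ℝ) + 1) hεpos.le)
            (by linarith : (0:ℝ) ≤ 3 * t + 4)]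
        have p1 : (N : ℝ) * (((n : ℝ) + 1) * ε ^ 2) ≤ 4 * ((n : ℝ) + 1) * (t + 1) * ε := by
          nlinarith [q1, q2]
        have q3 : (N : ℝ) * ε * (ψ n * ε) ≤ t * (ψ n * ε) :=
          mul_le_mul_of_nonneg_right hNε (mul_nonneg (hψ n) hεpos.le)
        have q4 : t * (ψ n * ε) ≤ t * ψ n := by
          nlinarith [mul_nonneg ht.le (mul_nonneg (hψ n) (by linarith : (0:ℝ) ≤ 1 - ε))]
        have p2 : ψ n + (N : ℝ) * (ψ n * ε ^ 2) ≤ (t + 1) * ψ n := by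
          nlinarith [q3, q4]
        simp only [hD]
        nlinarith [hsumpsi, hεpos.le]
end
end

section
/- Let 𝒳 = {0,1,2}^ℤ with the left shift σ, and let μ be the Bernoulli (i.i.d. product) probability measure on 𝒳 determined by a probability vector (p₀, p₁, p₂) ∈ (0,1)³ with p₀ + p₁ + p₂ = 1. For n ≥ 1 let 𝒰_n = {x ∈ 𝒳 : x₀ = 0 and x_i ∈ {1,2} for 1 ≤ i ≤ n−1}, and let τ_n(x) = inf{k ≥ 1 : σ^k x ∈ 𝒰_n}. Then the rescaled entry times X_n = μ(𝒰_n)·τ_n converge in law to an exponential random variable of parameter 1; that is, for every t > 0, μ{x ∈ 𝒳 : μ(𝒰_n)·τ_n(x) ≥ t} → e^{−t} as n → ∞. -/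
set_option linter.unusedSectionVars false
set_option maxHeartbeats 1000000


open MeasureTheory Filter Set ENNReal

noncomputable section

namespace BAux

open scoped Classical

abbrev X := FullShift 3

/-- extend a pattern on `s` by `0` elsewhere -/
def extFn (s : Finset ℤ) (f : {i // i ∈ s} → Fin 3) : X :=
  fun i => if h : i ∈ s then f ⟨i, h⟩ else 0

def cylSet (s : Finset ℤ) (f : {i // i ∈ s} → Fin 3) : Set X :=
  {x | ∀ i : {i // i ∈ s}, x (i : ℤ) = f i}

/-- `E` is determined by the coordinates in `s`. -/
def Det (s : Finset ℤ) (E : Set X) : Prop :=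
  ∀ x y : X, (∀ i ∈ s, x i = y i) → (x ∈ E ↔ y ∈ E)

theorem Det.mono {s s' : Finset ℤ} {E : Set X} (h : Det s E) (hss : s ⊆ s') :
    Det s' E := fun x y hxy => h x y (fun i hi => hxy i (hss hi))

theorem Det.inter {s : Finset ℤ} {E F : Set X} (hE : Det s E) (hF : Det s F) :
    Det s (E ∩ F) := fun x y hxy => by
  simp only [Set.mem_inter_iff, hE x y hxy, hF x y hxy]

theorem Det.compl {s : Finset ℤ} {E : Set X} (hE : Det s E) : Det s Eᶜ :=
  fun x y hxy => by simp only [Set.mem_compl_iff, hE x y hxy]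

theorem Det.biInter {ι : Type*} {F : Finset ι} {s : ι → Finset ℤ} {E : ι → Set X}
    (h : ∀ j ∈ F, Det (s j) (E j)) {S : Finset ℤ} (hS : ∀ j ∈ F, s j ⊆ S) :
    Det S (⋂ j ∈ F, E j) := by
  intro x y hxy
  simp only [Set.mem_iInter]
  exact forall_congr' fun j => forall_congr' fun hj => (h j hj).mono (hS j hj) x y hxy

theorem cylSet_measurable (s : Finset ℤ) (f : {i // i ∈ s} → Fin 3) :
    MeasurableSet (cylSet s f) := by
  have : cylSet s f = ⋂ i : {i // i ∈ s}, (fun x : X => x (i : ℤ)) ⁻¹' {f i} := by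
    ext x; simp [cylSet]
  rw [this]
  exact MeasurableSet.iInter fun i =>
    (measurable_pi_apply (i : ℤ)) (measurableSet_singleton _)

/-- the set of patterns on `s` compatible with `E` -/
def patts (s : Finset ℤ) (E : Set X) : Finset ({i // i ∈ s} → Fin 3) :=
  Finset.univ.filter (fun f => extFn s f ∈ E)

theorem det_decomp {s : Finset ℤ} {E : Set X} (hE : Det s E) :
    E = ⋃ f ∈ patts s E, cylSet s f := by
  ext x
  simp only [Set.mem_iUnion, patts, Finset.mem_filter, Finset.mem_univ, true_and]
  constructor
  · intro hx
    refine ⟨fun i => x (i : ℤ), ?_, fun i => rfl⟩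
    exact (hE x (extFn s (fun i => x (i : ℤ))) (fun i hi => by simp [extFn, hi])).mp hx
  · rintro ⟨f, hf, hxf⟩
    exact (hE x (extFn s f) (fun i hi => by simp [extFn, hi, hxf ⟨i, hi⟩])).mpr hf

theorem det_measurableSet {s : Finset ℤ} {E : Set X} (hE : Det s E) :
    MeasurableSet E := by
  rw [det_decomp hE]
  exact (patts s E).measurableSet_biUnion fun f _ => cylSet_measurable s f

theorem cylSet_disjoint {s : Finset ℤ} {f g : {i // i ∈ s} → Fin 3} (hfg : f ≠ g) :
    Disjoint (cylSet s f) (cylSet s g) := by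
  rw [Set.disjoint_left]
  intro x hxf hxg
  exact hfg (funext fun i => (hxf i).symm.trans (hxg i))

theorem prodP_eq (p : Fin 3 → ℝ) (s : Finset ℤ) (f : {i // i ∈ s} → Fin 3) :
    ∏ i ∈ s.attach, p (f i) = ∏ i ∈ s, p (extFn s f i) := by
  rw [← Finset.prod_attach s (fun i => p (extFn s f i))]
  exact Finset.prod_congr rfl fun i _ => by simp [extFn, i.2]

section Measure

variable (μ : Measure X) [IsProbabilityMeasure μ] (p : Fin 3 → ℝ)
variable (hB : ∀ (s : Finset ℤ) (f : ℤ → Fin 3),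
  (μ {x : X | ∀ i ∈ s, x i = f i}).toReal = ∏ i ∈ s, p (f i))

include hB

theorem cyl_measure (s : Finset ℤ) (f : {i // i ∈ s} → Fin 3) :
    (μ (cylSet s f)).toReal = ∏ i ∈ s.attach, p (f i) := by
  have h1 : {x : X | ∀ i ∈ s, x i = extFn s f i} = cylSet s f := by
    ext x
    simp only [Set.mem_setOf_eq, cylSet]
    constructor
    · intro h i; have := h (i : ℤ) i.2; simpa [extFn, i.2] using this
    · intro h i hi; simpa [extFn, hi] using h ⟨i, hi⟩
  have h2 := hB s (extFn s f)
  rw [h1] at h2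
  rw [h2, ← Finset.prod_attach s (fun i => p (extFn s f i))]
  exact Finset.prod_congr rfl fun i _ => by simp [extFn, i.2]

theorem det_measure {s : Finset ℤ} {E : Set X} (hE : Det s E) :
    (μ E).toReal = ∑ f ∈ patts s E, ∏ i ∈ s.attach, p (f i) := by
  conv_lhs => rw [det_decomp hE]
  rw [measure_biUnion_finset ?_ (fun f _ => cylSet_measurable s f)]
  · rw [ENNReal.toReal_sum (fun f _ => measure_ne_top μ _)]
    exact Finset.sum_congr rfl fun f _ => cyl_measure μ p hB s f
  · intro f hf g hg hfg
    exact cylSet_disjoint hfg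

theorem det_measure_inter {s₁ s₂ : Finset ℤ} (hd : Disjoint s₁ s₂)
    {E₁ E₂ : Set X} (hE₁ : Det s₁ E₁) (hE₂ : Det s₂ E₂) :
    (μ (E₁ ∩ E₂)).toReal = (μ E₁).toReal * (μ E₂).toReal := by
  classical
  set s := s₁ ∪ s₂ with hs
  have hsub1 : s₁ ⊆ s := Finset.subset_union_left
  have hsub2 : s₂ ⊆ s := Finset.subset_union_right
  have hE : Det s (E₁ ∩ E₂) := (hE₁.mono hsub1).inter (hE₂.mono hsub2)
  rw [det_measure μ p hB hE, det_measure μ p hB hE₁, det_measure μ p hB hE₂,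
    Finset.sum_mul_sum, ← Finset.sum_product']
  -- maps
  set i₁ : {i // i ∈ s₁} → {i // i ∈ s} := fun i => ⟨i, hsub1 i.2⟩ with hi₁
  set i₂ : {i // i ∈ s₂} → {i // i ∈ s} := fun i => ⟨i, hsub2 i.2⟩ with hi₂
  have key1 : ∀ f : {i // i ∈ s} → Fin 3, ∀ i ∈ s₁,
      extFn s f i = extFn s₁ (f ∘ i₁) i := by
    intro f i hi; simp [extFn, hi, hsub1 hi, i₁]
  have key2 : ∀ f : {i // i ∈ s} → Fin 3, ∀ i ∈ s₂,
      extFn s f i = extFn s₂ (f ∘ i₂) i := by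
    intro f i hi; simp [extFn, hi, hsub2 hi, i₂]
  refine Finset.sum_nbij' (fun f => (f ∘ i₁, f ∘ i₂))
    (fun gh => fun i => if hi : (i : ℤ) ∈ s₁ then gh.1 ⟨i, hi⟩ else
      gh.2 ⟨i, (Finset.mem_union.mp i.2).resolve_left hi⟩) ?_ ?_ ?_ ?_ ?_
  · -- maps to
    intro f hf
    simp only [patts, Finset.mem_filter, Finset.mem_univ, true_and] at hf ⊢
    rw [Finset.mem_product]
    constructor
    · simp only [patts, Finset.mem_filter, Finset.mem_univ, true_and]
      exact (hE₁ (extFn s f) (extFn s₁ (f ∘ i₁)) (key1 f)).mp hf.1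
    · simp only [patts, Finset.mem_filter, Finset.mem_univ, true_and]
      exact (hE₂ (extFn s f) (extFn s₂ (f ∘ i₂)) (key2 f)).mp hf.2
  · -- maps back
    rintro ⟨g, h⟩ hgh
    rw [Finset.mem_product] at hgh
    simp only [patts, Finset.mem_filter, Finset.mem_univ, true_and] at hgh ⊢
    set f : {i // i ∈ s} → Fin 3 := fun i => if hi : (i : ℤ) ∈ s₁ then g ⟨i, hi⟩ else
      h ⟨i, (Finset.mem_union.mp i.2).resolve_left hi⟩ with hfdef
    have hfg : f ∘ i₁ = g := by
      funext i; simp [hfdef, i₁, i.2]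
    have hfh : f ∘ i₂ = h := by
      funext i
      have hni : (i : ℤ) ∉ s₁ := fun hmem => (Finset.disjoint_left.mp hd) hmem i.2
      simp [hfdef, i₂, hni]
    constructor
    · refine (hE₁ (extFn s f) (extFn s₁ (f ∘ i₁)) (key1 f)).mpr ?_
      rw [hfg]; exact hgh.1
    · refine (hE₂ (extFn s f) (extFn s₂ (f ∘ i₂)) (key2 f)).mpr ?_
      rw [hfh]; exact hgh.2
  · -- left inverse
    intro f hf
    funext i
    by_cases hi : (i : ℤ) ∈ s₁ <;> simp [hi, i₁, i₂]
  · -- right inverse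
    rintro ⟨g, h⟩ hgh
    have hd' := hd
    refine Prod.ext ?_ ?_
    · funext i; simp [i₁, i.2]
    · funext i
      have hni : (i : ℤ) ∉ s₁ := fun hmem => (Finset.disjoint_left.mp hd) hmem i.2
      simp [i₂, hni]
  · -- values
    intro f hf
    simp only
    rw [prodP_eq p, prodP_eq p, prodP_eq p]
    have h1 : ∏ i ∈ s₁, p (extFn s₁ (f ∘ i₁) i) = ∏ i ∈ s₁, p (extFn s f i) :=
      Finset.prod_congr rfl fun i hi => by rw [key1 f i hi]
    have h2 : ∏ i ∈ s₂, p (extFn s₂ (f ∘ i₂) i) = ∏ i ∈ s₂, p (extFn s f i) :=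
      Finset.prod_congr rfl fun i hi => by rw [key2 f i hi]
    rw [h1, h2, ← Finset.prod_union hd]

theorem det_measure_biInter {m : ℕ} {s : ℕ → Finset ℤ} {E : ℕ → Set X}
    (hdet : ∀ j, j < m → Det (s j) (E j))
    (hdis : ∀ j j', j < m → j' < m → j ≠ j' → Disjoint (s j) (s j')) :
    (μ (⋂ j ∈ Finset.range m, E j)).toReal = ∏ j ∈ Finset.range m, (μ (E j)).toReal := by
  induction m with
  | zero => simp
  | succ m ih =>
    rw [Finset.range_add_one, Finset.set_biInter_insert, Finset.prod_insert (by simp)]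
    have hdet' : ∀ j, j < m → Det (s j) (E j) := fun j hj => hdet j (hj.trans (Nat.lt_succ_self m))
    have hdis' : ∀ j j', j < m → j' < m → j ≠ j' → Disjoint (s j) (s j') :=
      fun j j' hj hj' => hdis j j' (hj.trans (Nat.lt_succ_self m)) (hj'.trans (Nat.lt_succ_self m))
    rw [← ih hdet' hdis']
    refine det_measure_inter μ p hB (s₂ := (Finset.range m).biUnion s) ?_ (hdet m (Nat.lt_succ_self m)) ?_
    · refine Finset.disjoint_biUnion_right _ _ _ |>.mpr (fun j hj => ?_)
      have hjm : j < m := Finset.mem_range.mp hj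
      exact hdis m j (Nat.lt_succ_self m) (hjm.trans (Nat.lt_succ_self m))
        (fun h => absurd (h ▸ hjm) (lt_irrefl m))
    · exact Det.biInter (fun j hj => hdet' j (Finset.mem_range.mp hj))
        (fun j hj => Finset.subset_biUnion_of_mem s hj)

end Measure

section RealMeasure

variable (μ : Measure X) [IsProbabilityMeasure μ]

theorem nu_union_le (F : Finset ℕ) (A : ℕ → Set X) :
    (μ (⋃ k ∈ F, A k)).toReal ≤ ∑ k ∈ F, (μ (A k)).toReal := by
  rw [← ENNReal.toReal_sum (fun k _ => measure_ne_top μ _)]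
  exact ENNReal.toReal_mono
    (ENNReal.sum_ne_top.mpr (fun k _ => measure_ne_top μ _))
    (measure_biUnion_finset_le F A)

theorem nu_union_inter {Y : Set X} (hY : MeasurableSet Y) (Z : Set X) :
    (μ (Z ∪ Y)).toReal = (μ Z).toReal + (μ Y).toReal - (μ (Z ∩ Y)).toReal := by
  have h := measure_union_add_inter (μ := μ) Z hY
  have h' := congrArg ENNReal.toReal h
  rw [ENNReal.toReal_add (measure_ne_top μ _) (measure_ne_top μ _),
    ENNReal.toReal_add (measure_ne_top μ _) (measure_ne_top μ _)] at h'
  linarith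

theorem nu_compl {E : Set X} (hE : MeasurableSet E) :
    (μ Eᶜ).toReal = 1 - (μ E).toReal := by
  rw [measure_compl hE (measure_ne_top μ _),
    ENNReal.toReal_sub_of_le (measure_mono (Set.subset_univ E)) (measure_ne_top μ _)]
  simp

theorem nu_inter_ge {C D : Set X} :
    (μ C).toReal - (μ Dᶜ).toReal ≤ (μ (C ∩ D)).toReal := by
  have hsub : C ⊆ (C ∩ D) ∪ Dᶜ := by
    intro x hx
    by_cases hD : x ∈ D
    · exact Or.inl ⟨hx, hD⟩
    · exact Or.inr hD
  have h1 : μ C ≤ μ (C ∩ D) + μ Dᶜ := (measure_mono hsub).trans (measure_union_le _ _)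
  have h2 : (μ C).toReal ≤ (μ (C ∩ D)).toReal + (μ Dᶜ).toReal := by
    rw [← ENNReal.toReal_add (measure_ne_top μ _) (measure_ne_top μ _)]
    exact ENNReal.toReal_mono (ENNReal.add_ne_top.mpr ⟨measure_ne_top μ _, measure_ne_top μ _⟩) h1
  linarith

theorem nu_mono {A B : Set X} (h : A ⊆ B) : (μ A).toReal ≤ (μ B).toReal :=
  ENNReal.toReal_mono (measure_ne_top μ _) (measure_mono h)

theorem bonferroni (F : Finset ℕ) (A : ℕ → Set X) (hA : ∀ k, MeasurableSet (A k))
    (c : ℝ) (hc : 0 ≤ c)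
    (h : ∀ a ∈ F, ∑ k ∈ F.erase a, (μ (A a ∩ A k)).toReal ≤ c) :
    ∑ k ∈ F, (μ (A k)).toReal - F.card * c ≤ (μ (⋃ k ∈ F, A k)).toReal := by
  classical
  induction F using Finset.induction_on with
  | empty => simp
  | insert _ _ ha =>
    rename_i a F ih
    have h'a : ∑ k ∈ F, (μ (A a ∩ A k)).toReal ≤ c := by
      have := h a (Finset.mem_insert_self a F)
      rwa [Finset.erase_insert ha] at this
    have hF : ∀ b ∈ F, ∑ k ∈ F.erase b, (μ (A b ∩ A k)).toReal ≤ c := by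
      intro b hb
      refine le_trans ?_ (h b (Finset.mem_insert_of_mem hb))
      refine Finset.sum_le_sum_of_subset_of_nonneg ?_ (fun k _ _ => ENNReal.toReal_nonneg)
      exact Finset.erase_subset_erase b (Finset.subset_insert a F)
    have IH := ih hF
    rw [Finset.set_biUnion_insert, Finset.sum_insert ha, Finset.card_insert_of_notMem ha]
    have hU : MeasurableSet (⋃ k ∈ F, A k) := F.measurableSet_biUnion (fun k _ => hA k)
    rw [nu_union_inter μ hU (A a)]
    have hint : (μ (A a ∩ ⋃ k ∈ F, A k)).toReal ≤ c := by
      have heq : A a ∩ ⋃ k ∈ F, A k = ⋃ k ∈ F, (A a ∩ A k) := by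
        rw [Set.inter_iUnion₂]
      rw [heq]
      exact (nu_union_le μ F _).trans h'a
    push_cast
    linarith

end RealMeasure

/-! ### The specific entry sets -/

/-- the event that the word `0(12)^{n-1}` occurs at position `k` -/
def Aset (n k : ℕ) : Set X :=
  {x | x ((k : ℕ) : ℤ) = 0 ∧ ∀ i : ℕ, 1 ≤ i → i ≤ n - 1 →
    (x (((k + i : ℕ) : ℤ)) = 1 ∨ x (((k + i : ℕ) : ℤ)) = 2)}

def suppA (n k : ℕ) : Finset ℤ := Finset.Icc (k : ℤ) ((k : ℤ) + ((n - 1 : ℕ) : ℤ))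

theorem det_Aset (n k : ℕ) : Det (suppA n k) (Aset n k) := by
  intro x y hxy
  have hk : (k : ℤ) ∈ suppA n k := by
    simp only [suppA, Finset.mem_Icc]
    constructor
    · rfl
    · have : (0 : ℤ) ≤ ((n - 1 : ℕ) : ℤ) := Int.natCast_nonneg _
      omega
  have hki : ∀ i : ℕ, 1 ≤ i → i ≤ n - 1 → ((k + i : ℕ) : ℤ) ∈ suppA n k := by
    intro i h1 h2
    simp only [suppA, Finset.mem_Icc]
    push_cast
    constructor
    · omega
    · have : (i : ℤ) ≤ ((n - 1 : ℕ) : ℤ) := Int.ofNat_le.mpr h2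
      omega
  constructor
  · rintro ⟨h0, hrest⟩
    refine ⟨by rw [← hxy _ hk]; exact h0, fun i h1 h2 => ?_⟩
    rw [← hxy _ (hki i h1 h2)]
    exact hrest i h1 h2
  · rintro ⟨h0, hrest⟩
    refine ⟨by rw [hxy _ hk]; exact h0, fun i h1 h2 => ?_⟩
    rw [hxy _ (hki i h1 h2)]
    exact hrest i h1 h2

theorem meas_Aset (n k : ℕ) : MeasurableSet (Aset n k) := det_measurableSet (det_Aset n k)

section AMeasure

variable (μ : Measure X) [IsProbabilityMeasure μ] (p : Fin 3 → ℝ)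
variable (hB : ∀ (s : Finset ℤ) (f : ℤ → Fin 3),
  (μ {x : X | ∀ i ∈ s, x i = f i}).toReal = ∏ i ∈ s, p (f i))

include hB

theorem single_measure (c : ℤ) (j : Fin 3) :
    (μ {x : X | x c = j}).toReal = p j := by
  have hset : {x : X | ∀ i ∈ ({c} : Finset ℤ), x i = (fun _ => j) i} = {x : X | x c = j} := by
    ext x; simp
  have h := hB {c} (fun _ => j)
  rw [hset] at h
  simpa using h

theorem Aset_measure {n : ℕ} (hn : 1 ≤ n) (k : ℕ) :
    (μ (Aset n k)).toReal = p 0 * (p 1 + p 2) ^ (n - 1) := by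
  induction n, hn using Nat.le_induction with
  | base =>
    have h1 : Aset 1 k = {x : X | x (k : ℤ) = 0} := by
      ext x; simp only [Aset, Set.mem_setOf_eq]
      exact ⟨fun h => h.1, fun h => ⟨h, fun i h1 h2 => by omega⟩⟩
    rw [h1, single_measure μ p hB]
    simp
  | succ n hn ih =>
    have hsplit : Aset (n + 1) k =
        Aset n k ∩ ({x : X | x ((k + n : ℕ) : ℤ) = 1} ∪ {x : X | x ((k + n : ℕ) : ℤ) = 2}) := by
      ext x
      simp only [Aset, Set.mem_inter_iff, Set.mem_setOf_eq, Set.mem_union]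
      constructor
      · rintro ⟨h0, hrest⟩
        exact ⟨⟨h0, fun i h1 h2 => hrest i h1 (by omega)⟩, hrest n hn (by omega)⟩
      · rintro ⟨⟨h0, hrest⟩, hn'⟩
        refine ⟨h0, fun i h1 h2 => ?_⟩
        rcases Nat.lt_or_ge i n with hi | hi
        · exact hrest i h1 (by omega)
        · have : i = n := by omega
          subst this; exact hn'
    have hdisj : Disjoint {x : X | x ((k + n : ℕ) : ℤ) = 1} {x : X | x ((k + n : ℕ) : ℤ) = 2} := by
      rw [Set.disjoint_left]
      intro x h1 h2
      simp only [Set.mem_setOf_eq] at h1 h2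
      rw [h1] at h2; exact absurd h2 (by decide)
    have hdsupp : ∀ j : Fin 3, Disjoint (suppA n k) ({((k + n : ℕ) : ℤ)} : Finset ℤ) := by
      intro j
      rw [Finset.disjoint_right]
      intro z hz
      simp only [Finset.mem_singleton] at hz
      subst hz
      simp only [suppA, Finset.mem_Icc, not_and, not_le]
      intro _
      push_cast
      have : ((n - 1 : ℕ) : ℤ) < (n : ℤ) := by
        have := Nat.sub_lt hn Nat.one_pos
        exact_mod_cast this
      omega
    have hdet1 : Det ({((k + n : ℕ) : ℤ)} : Finset ℤ) {x : X | x ((k + n : ℕ) : ℤ) = 1} := by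
      intro x y hxy
      simp only [Set.mem_setOf_eq, hxy _ (Finset.mem_singleton_self _)]
    have hdet2 : Det ({((k + n : ℕ) : ℤ)} : Finset ℤ) {x : X | x ((k + n : ℕ) : ℤ) = 2} := by
      intro x y hxy
      simp only [Set.mem_setOf_eq, hxy _ (Finset.mem_singleton_self _)]
    have hm1 : MeasurableSet {x : X | x ((k + n : ℕ) : ℤ) = 1} := det_measurableSet hdet1
    have hm2 : MeasurableSet {x : X | x ((k + n : ℕ) : ℤ) = 2} := det_measurableSet hdet2
    rw [hsplit, Set.inter_union_distrib_left,
      measure_union (hdisj.mono Set.inter_subset_right Set.inter_subset_right)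
        ((meas_Aset n k).inter hm2),
      ENNReal.toReal_add (measure_ne_top μ _) (measure_ne_top μ _),
      det_measure_inter μ p hB (hdsupp 1) (det_Aset n k) hdet1,
      det_measure_inter μ p hB (hdsupp 2) (det_Aset n k) hdet2,
      single_measure μ p hB, single_measure μ p hB, ih]
    have h1 : n + 1 - 1 = (n - 1) + 1 := by omega
    rw [h1, pow_succ]
    ring

theorem Aset_inter_le {n : ℕ} (hn : 1 ≤ n) {k k' : ℕ} (hlt : k < k') :
    (μ (Aset n k ∩ Aset n k')).toReal ≤
      (p 0 * (p 1 + p 2) ^ (n - 1)) * (p 0 * (p 1 + p 2) ^ (n - 1)) := by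
  rcases Nat.lt_or_ge k' (k + n) with hnear | hfar
  · -- near: empty intersection
    have hempty : Aset n k ∩ Aset n k' = ∅ := by
      rw [Set.eq_empty_iff_forall_notMem]
      rintro x ⟨⟨h0, hrest⟩, ⟨h0', _⟩⟩
      have hi : k + (k' - k) = k' := by omega
      have := hrest (k' - k) (by omega) (by omega)
      rw [hi, h0'] at this
      rcases this with h | h
      · exact absurd h (by decide)
      · exact absurd h (by decide)
    rw [hempty]
    simp only [measure_empty, ENNReal.toReal_zero]
    exact mul_self_nonneg _
  · -- far: independent
    have hdsupp : Disjoint (suppA n k) (suppA n k') := by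
      rw [Finset.disjoint_left]
      intro z hz hz'
      simp only [suppA, Finset.mem_Icc] at hz hz'
      have h1 : ((n - 1 : ℕ) : ℤ) < (n : ℤ) := by
        exact_mod_cast Nat.sub_lt hn Nat.one_pos
      have h2 : (k : ℤ) + (n : ℤ) ≤ (k' : ℤ) := by exact_mod_cast hfar
      omega
    rw [det_measure_inter μ p hB hdsupp (det_Aset n k) (det_Aset n k'),
      Aset_measure μ p hB hn, Aset_measure μ p hB hn]

end AMeasure

/-! ### Blocks -/

/-- no occurrence at any position in `F` -/
def GG (n : ℕ) (F : Finset ℕ) : Set X := ⋂ k ∈ F, (Aset n k)ᶜ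

theorem GG_antitone {n : ℕ} {F F' : Finset ℕ} (h : F ⊆ F') : GG n F' ⊆ GG n F := by
  intro x hx
  simp only [GG, Set.mem_iInter] at hx ⊢
  exact fun k hk => hx k (h hk)

theorem GG_compl_eq (n : ℕ) (F : Finset ℕ) : GG n F = (⋃ k ∈ F, Aset n k)ᶜ := by
  simp only [GG, Set.compl_iUnion]

theorem det_GG {n : ℕ} {F : Finset ℕ} {S : Finset ℤ} (h : ∀ k ∈ F, suppA n k ⊆ S) :
    Det S (GG n F) :=
  Det.biInter (fun k hk => (det_Aset n k).compl.mono (h k hk)) (fun k _ => Finset.Subset.refl S)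

theorem meas_GG (n : ℕ) (F : Finset ℕ) : MeasurableSet (GG n F) :=
  F.measurableSet_biInter (fun k _ => (meas_Aset n k).compl)

theorem GG_union (n : ℕ) (F F' : Finset ℕ) : GG n (F ∪ F') = GG n F ∩ GG n F' := by
  ext x
  simp only [GG, Set.mem_iInter, Set.mem_inter_iff, Finset.mem_union]
  constructor
  · intro h
    exact ⟨fun k hk => h k (Or.inl hk), fun k hk => h k (Or.inr hk)⟩
  · rintro ⟨h1, h2⟩ k hk
    rcases hk with hk | hk
    · exact h1 k hk
    · exact h2 k hk

section Blocks

variable (μ : Measure X) [IsProbabilityMeasure μ] (p : Fin 3 → ℝ)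
variable (hp : ∀ j, p j ∈ Set.Ioo (0 : ℝ) 1)
variable (hB : ∀ (s : Finset ℤ) (f : ℤ → Fin 3),
  (μ {x : X | ∀ i ∈ s, x i = f i}).toReal = ∏ i ∈ s, p (f i))

include hp hB

theorem nuGG_bounds {n : ℕ} (hn : 1 ≤ n) (F : Finset ℕ) :
    1 - F.card * (p 0 * (p 1 + p 2) ^ (n - 1)) ≤ (μ (GG n F)).toReal ∧
    (μ (GG n F)).toReal ≤ 1 - F.card * (p 0 * (p 1 + p 2) ^ (n - 1)) +
      (F.card * (p 0 * (p 1 + p 2) ^ (n - 1))) ^ 2 := by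
  classical
  set q : ℝ := p 0 * (p 1 + p 2) ^ (n - 1) with hqdef
  have hq : 0 ≤ q := by
    have h0 := (hp 0).1; have h1 := (hp 1).1; have h2 := (hp 2).1
    positivity
  have hU : MeasurableSet (⋃ k ∈ F, Aset n k) :=
    F.measurableSet_biUnion (fun k _ => meas_Aset n k)
  have hcompl : (μ (GG n F)).toReal = 1 - (μ (⋃ k ∈ F, Aset n k)).toReal := by
    rw [GG_compl_eq, nu_compl μ hU]
  have hsum : ∑ k ∈ F, (μ (Aset n k)).toReal = F.card * q := by
    rw [Finset.sum_congr rfl (fun k _ => Aset_measure μ p hB hn k)]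
    rw [Finset.sum_const, nsmul_eq_mul]
  constructor
  · rw [hcompl]
    have := (nu_union_le μ F (Aset n)).trans_eq hsum
    linarith
  · rw [hcompl]
    have hpair : ∀ a ∈ F, ∑ k ∈ F.erase a, (μ (Aset n a ∩ Aset n k)).toReal ≤
        F.card * (q * q) := by
      intro a ha
      have hterm : ∀ k ∈ F.erase a, (μ (Aset n a ∩ Aset n k)).toReal ≤ q * q := by
        intro k hk
        have hne : k ≠ a := Finset.ne_of_mem_erase hk
        rcases Nat.lt_or_ge a k with hlt | hge
        · exact Aset_inter_le μ p hB hn hlt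
        · have hlt : k < a := by omega
          rw [Set.inter_comm]
          exact Aset_inter_le μ p hB hn hlt
      calc ∑ k ∈ F.erase a, (μ (Aset n a ∩ Aset n k)).toReal
          ≤ (F.erase a).card * (q * q) := by
            have := Finset.sum_le_card_nsmul (F.erase a) _ (q * q) hterm
            rwa [nsmul_eq_mul] at this
        _ ≤ F.card * (q * q) := by
            have hc : (F.erase a).card ≤ F.card := Finset.card_erase_le
            have : ((F.erase a).card : ℝ) ≤ (F.card : ℝ) := by exact_mod_cast hc
            nlinarith [mul_self_nonneg q]
    have hbon := bonferroni μ F (Aset n) (fun k => meas_Aset n k)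
      (F.card * (q * q)) (by positivity) hpair
    rw [hsum] at hbon
    nlinarith [hbon]

theorem prod_blocks {n : ℕ} (hn : 1 ≤ n) (L m : ℕ) :
    (μ (⋂ j ∈ Finset.range m, GG n (Finset.Icc (j * (L + n) + 1) (j * (L + n) + L)))).toReal =
    ∏ j ∈ Finset.range m,
      (μ (GG n (Finset.Icc (j * (L + n) + 1) (j * (L + n) + L)))).toReal := by
  refine det_measure_biInter μ p hB
    (s := fun j => Finset.Icc ((j * (L + n) + 1 : ℕ) : ℤ) ((j * (L + n) + L + n - 1 : ℕ) : ℤ))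
    ?_ ?_
  · intro j hj
    refine det_GG (fun k hk => ?_)
    simp only [Finset.mem_Icc] at hk
    have h1 : ((j * (L + n) + 1 : ℕ) : ℤ) ≤ (k : ℤ) := by exact_mod_cast hk.1
    have h2 : (k : ℤ) + ((n - 1 : ℕ) : ℤ) ≤ ((j * (L + n) + L + n - 1 : ℕ) : ℤ) := by
      have : k + (n - 1) ≤ j * (L + n) + L + n - 1 := by omega
      have hcast : (k : ℤ) + ((n - 1 : ℕ) : ℤ) = ((k + (n - 1) : ℕ) : ℤ) := by push_cast; ring
      rw [hcast]
      exact_mod_cast this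
    exact Finset.Icc_subset_Icc h1 h2
  · have key : ∀ j j' : ℕ, j < j' →
        Disjoint (Finset.Icc ((j * (L + n) + 1 : ℕ) : ℤ) ((j * (L + n) + L + n - 1 : ℕ) : ℤ))
          (Finset.Icc ((j' * (L + n) + 1 : ℕ) : ℤ) ((j' * (L + n) + L + n - 1 : ℕ) : ℤ)) := by
      intro j j' hjj'
      rw [Finset.disjoint_left]
      intro z hz hz'
      simp only [Finset.mem_Icc] at hz hz'
      have hmul : (j + 1) * (L + n) ≤ j' * (L + n) := Nat.mul_le_mul_right _ (by omega)
      have hexp : (j + 1) * (L + n) = j * (L + n) + (L + n) := by ring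
      have hNat : j * (L + n) + L + n - 1 < j' * (L + n) + 1 := by omega
      have hInt : ((j * (L + n) + L + n - 1 : ℕ) : ℤ) < ((j' * (L + n) + 1 : ℕ) : ℤ) := by
        exact_mod_cast hNat
      omega
    intro j j' hj hj' hne
    rcases Nat.lt_or_ge j j' with h | h
    · exact key j j' h
    · have h' : j' < j := by omega
      exact (key j' j h').symm

theorem sandwich {n : ℕ} (hn : 1 ≤ n) (L R : ℕ)
    (hLq : (L : ℝ) * (p 0 * (p 1 + p 2) ^ (n - 1)) ≤ 1) :
    (1 - (L : ℝ) * (p 0 * (p 1 + p 2) ^ (n - 1))) ^ (R / (L + n) + 1) -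
        ((R / (L + n) + 1 : ℕ) : ℝ) * ((n : ℝ) * (p 0 * (p 1 + p 2) ^ (n - 1))) ≤
      (μ (GG n (Finset.Icc 1 R))).toReal ∧
    (μ (GG n (Finset.Icc 1 R))).toReal ≤
      (1 - (L : ℝ) * (p 0 * (p 1 + p 2) ^ (n - 1)) +
        ((L : ℝ) * (p 0 * (p 1 + p 2) ^ (n - 1))) ^ 2) ^ (R / (L + n)) := by
  classical
  set q : ℝ := p 0 * (p 1 + p 2) ^ (n - 1) with hqdef
  have hq : 0 ≤ q := by
    have h0 := (hp 0).1; have h1 := (hp 1).1; have h2 := (hp 2).1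
    positivity
  set m₁ : ℕ := R / (L + n) with hm₁
  set m₂ : ℕ := m₁ + 1 with hm₂
  have hLn : 0 < L + n := by omega
  set core : ℕ → Finset ℕ := fun j => Finset.Icc (j * (L + n) + 1) (j * (L + n) + L)
    with hcore
  set gap : ℕ → Finset ℕ := fun j => Finset.Icc (j * (L + n) + L + 1) (j * (L + n) + L + n)
    with hgap
  have hcardcore : ∀ j, (core j).card = L := by
    intro j; simp only [hcore, Nat.card_Icc]; omega
  have hcardgap : ∀ j, (gap j).card = n := by
    intro j; simp only [hgap, Nat.card_Icc]; omega
  have hnucore : ∀ j,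
      1 - (L : ℝ) * q ≤ (μ (GG n (core j))).toReal ∧
      (μ (GG n (core j))).toReal ≤ 1 - (L : ℝ) * q + ((L : ℝ) * q) ^ 2 := by
    intro j
    have := nuGG_bounds μ p hp hB hn (core j)
    rwa [hcardcore j] at this
  constructor
  · -- lower bound
    have hdm : m₁ * (L + n) + R % (L + n) = R := by rw [hm₁, Nat.mul_comm]; exact Nat.div_add_mod R (L + n)
    have hmod : R % (L + n) < L + n := Nat.mod_lt R hLn
    have hRm2 : R ≤ m₂ * (L + n) := by
      have : m₂ * (L + n) = m₁ * (L + n) + (L + n) := by ring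
      omega
    have hsub1 : Finset.Icc 1 R ⊆ Finset.Icc 1 (m₂ * (L + n)) :=
      Finset.Icc_subset_Icc le_rfl hRm2
    have step1 : (μ (GG n (Finset.Icc 1 (m₂ * (L + n))))).toReal ≤
        (μ (GG n (Finset.Icc 1 R))).toReal := nu_mono μ (GG_antitone hsub1)
    set cores : Finset ℕ := (Finset.range m₂).biUnion core with hcores
    set gaps : Finset ℕ := (Finset.range m₂).biUnion gap with hgaps
    have hcover : Finset.Icc 1 (m₂ * (L + n)) ⊆ cores ∪ gaps := by
      intro k hk
      rw [Finset.mem_Icc] at hk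
      set j : ℕ := (k - 1) / (L + n) with hj
      set r : ℕ := (k - 1) % (L + n) with hr
      have hdm' : j * (L + n) + r = k - 1 := by rw [hj, hr, Nat.mul_comm]; exact Nat.div_add_mod (k - 1) (L + n)
      have hrlt : r < L + n := Nat.mod_lt _ hLn
      have hjlt : j < m₂ := by
        rw [hj, Nat.div_lt_iff_lt_mul hLn]
        omega
      rw [Finset.mem_union]
      rcases Nat.lt_or_ge r L with hrL | hrL
      · left
        rw [hcores, Finset.mem_biUnion]
        exact ⟨j, Finset.mem_range.mpr hjlt, by
          simp only [hcore, Finset.mem_Icc]; omega⟩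
      · right
        rw [hgaps, Finset.mem_biUnion]
        exact ⟨j, Finset.mem_range.mpr hjlt, by
          simp only [hgap, Finset.mem_Icc]; omega⟩
    have step2 : (μ (GG n (cores ∪ gaps))).toReal ≤
        (μ (GG n (Finset.Icc 1 (m₂ * (L + n))))).toReal :=
      nu_mono μ (GG_antitone hcover)
    rw [GG_union] at step2
    have step3 : (μ (GG n cores)).toReal - (μ ((GG n gaps)ᶜ)).toReal ≤
        (μ (GG n cores ∩ GG n gaps)).toReal := nu_inter_ge μ
    -- cores product
    have hcoreseq : GG n cores = ⋂ j ∈ Finset.range m₂, GG n (core j) := by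
      ext x
      simp only [GG, Set.mem_iInter, hcores, Finset.mem_biUnion]
      constructor
      · intro h j hj k hk
        exact h k ⟨j, hj, hk⟩
      · rintro h k ⟨j, hj, hk⟩
        exact h j hj k hk
    have hprod : (μ (GG n cores)).toReal =
        ∏ j ∈ Finset.range m₂, (μ (GG n (core j))).toReal := by
      rw [hcoreseq]; exact prod_blocks μ p hp hB hn L m₂
    have hprodge : (1 - (L : ℝ) * q) ^ m₂ ≤ (μ (GG n cores)).toReal := by
      rw [hprod]
      calc (1 - (L : ℝ) * q) ^ m₂
          = ∏ _j ∈ Finset.range m₂, (1 - (L : ℝ) * q) := by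
            rw [Finset.prod_const, Finset.card_range]
        _ ≤ ∏ j ∈ Finset.range m₂, (μ (GG n (core j))).toReal :=
            Finset.prod_le_prod (fun j _ => by linarith) (fun j _ => (hnucore j).1)
    -- gaps bound
    have hgapbound : (μ ((GG n gaps)ᶜ)).toReal ≤ (m₂ : ℝ) * ((n : ℝ) * q) := by
      rw [GG_compl_eq, compl_compl]
      refine (nu_union_le μ gaps (Aset n)).trans ?_
      have : ∑ k ∈ gaps, (μ (Aset n k)).toReal = (gaps.card : ℝ) * q := by
        rw [Finset.sum_congr rfl (fun k _ => Aset_measure μ p hB hn k),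
          Finset.sum_const, nsmul_eq_mul]
      rw [this]
      have hcard : gaps.card ≤ m₂ * n := by
        refine (Finset.card_biUnion_le).trans ?_
        rw [Finset.sum_congr rfl (fun j _ => hcardgap j), Finset.sum_const,
          Finset.card_range, smul_eq_mul]
      have : (gaps.card : ℝ) ≤ (m₂ : ℝ) * (n : ℝ) := by exact_mod_cast hcard
      nlinarith
    have : ((m₂ : ℕ) : ℝ) = ((R / (L + n) + 1 : ℕ) : ℝ) := by rw [hm₂, hm₁]
    calc (1 - (L : ℝ) * q) ^ (R / (L + n) + 1) -
          ((R / (L + n) + 1 : ℕ) : ℝ) * ((n : ℝ) * q)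
        = (1 - (L : ℝ) * q) ^ m₂ - (m₂ : ℝ) * ((n : ℝ) * q) := by rw [this]
      _ ≤ (μ (GG n cores)).toReal - (μ ((GG n gaps)ᶜ)).toReal := by
          have := hgapbound; linarith
      _ ≤ (μ (GG n cores ∩ GG n gaps)).toReal := step3
      _ ≤ (μ (GG n (Finset.Icc 1 (m₂ * (L + n))))).toReal := step2
      _ ≤ (μ (GG n (Finset.Icc 1 R))).toReal := step1
  · -- upper bound
    have hsub : ∀ j ∈ Finset.range m₁, core j ⊆ Finset.Icc 1 R := by
      intro j hj
      rw [Finset.mem_range] at hj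
      intro k hk
      simp only [hcore, Finset.mem_Icc] at hk
      rw [Finset.mem_Icc]
      have hmul : (j + 1) * (L + n) ≤ m₁ * (L + n) := Nat.mul_le_mul_right _ (by omega)
      have hdiv : m₁ * (L + n) ≤ R := Nat.div_mul_le_self R (L + n)
      have hexp : (j + 1) * (L + n) = j * (L + n) + (L + n) := by ring
      omega
    have hsubset : GG n (Finset.Icc 1 R) ⊆ ⋂ j ∈ Finset.range m₁, GG n (core j) := by
      refine Set.subset_iInter₂ (fun j hj => GG_antitone (hsub j hj))
    calc (μ (GG n (Finset.Icc 1 R))).toReal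
        ≤ (μ (⋂ j ∈ Finset.range m₁, GG n (core j))).toReal := nu_mono μ hsubset
      _ = ∏ j ∈ Finset.range m₁, (μ (GG n (core j))).toReal :=
          prod_blocks μ p hp hB hn L m₁
      _ ≤ (1 - (L : ℝ) * q + ((L : ℝ) * q) ^ 2) ^ m₁ := by
          calc ∏ j ∈ Finset.range m₁, (μ (GG n (core j))).toReal
              ≤ ∏ _j ∈ Finset.range m₁, (1 - (L : ℝ) * q + ((L : ℝ) * q) ^ 2) :=
                Finset.prod_le_prod (fun j _ => ENNReal.toReal_nonneg)
                  (fun j _ => (hnucore j).2)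
            _ = (1 - (L : ℝ) * q + ((L : ℝ) * q) ^ 2) ^ m₁ := by
                rw [Finset.prod_const, Finset.card_range]

end Blocks

/-! ### Analysis -/

theorem log_one_add_div_tendsto :
    Tendsto (fun x : ℝ => Real.log (1 + x) / x) (nhdsWithin 0 {0}ᶜ) (nhds 1) := by
  have hderiv : HasDerivAt Real.log 1 1 := by
    simpa using Real.hasDerivAt_log one_ne_zero
  have hslope : Tendsto (slope Real.log 1) (nhdsWithin 1 {1}ᶜ) (nhds 1) :=
    hasDerivAt_iff_tendsto_slope.mp hderiv
  have hmap : Tendsto (fun x : ℝ => 1 + x) (nhdsWithin 0 {0}ᶜ) (nhdsWithin 1 {1}ᶜ) := by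
    rw [tendsto_nhdsWithin_iff]
    constructor
    · have hcont : Continuous (fun x : ℝ => 1 + x) := by continuity
      have : Tendsto (fun x : ℝ => 1 + x) (nhds 0) (nhds 1) := by
        simpa using hcont.tendsto (0 : ℝ)
      exact this.mono_left nhdsWithin_le_nhds
    · filter_upwards [self_mem_nhdsWithin] with x hx
      simp only [Set.mem_compl_iff, Set.mem_singleton_iff] at hx ⊢
      intro h
      exact hx (by linarith)
  have hcomp := hslope.comp hmap
  refine hcomp.congr (fun x => ?_)
  simp only [Function.comp_apply, slope_def_field]
  rw [Real.log_one]
  congr 1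
  · ring_nf
  · ring

theorem pow_tendsto_exp (a : ℕ → ℝ) (m : ℕ → ℕ) (c : ℝ) (hc : c ≠ 0)
    (ha : Tendsto a atTop (nhds 0))
    (hma : Tendsto (fun n => (m n : ℝ) * a n) atTop (nhds c)) :
    Tendsto (fun n => (1 + a n) ^ m n) atTop (nhds (Real.exp c)) := by
  have hane : ∀ᶠ n in atTop, a n ≠ 0 := by
    have h1 : ∀ᶠ n in atTop, (m n : ℝ) * a n ≠ 0 := hma.eventually_ne hc
    filter_upwards [h1] with n hn ha0
    exact hn (by rw [ha0, mul_zero])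
  have hasmall : ∀ᶠ n in atTop, |a n| < 1 := by
    have := ha.eventually (eventually_abs_sub_lt 0 one_pos)
    simpa using this
  have hain : Tendsto a atTop (nhdsWithin 0 {0}ᶜ) := by
    rw [tendsto_nhdsWithin_iff]
    exact ⟨ha, hane.mono (fun n hn => hn)⟩
  have hlog : Tendsto (fun n => Real.log (1 + a n) / a n) atTop (nhds 1) :=
    log_one_add_div_tendsto.comp hain
  have hmulog : Tendsto (fun n => (m n : ℝ) * Real.log (1 + a n)) atTop (nhds c) := by
    have hprod : Tendsto (fun n => ((m n : ℝ) * a n) * (Real.log (1 + a n) / a n))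
        atTop (nhds (c * 1)) := hma.mul hlog
    rw [mul_one] at hprod
    refine hprod.congr' ?_
    filter_upwards [hane] with n hn
    field_simp
  have hexp : Tendsto (fun n => Real.exp ((m n : ℝ) * Real.log (1 + a n))) atTop
      (nhds (Real.exp c)) := (Real.continuous_exp.tendsto c).comp hmulog
  refine hexp.congr' ?_
  filter_upwards [hasmall] with n hn
  have hpos : 0 < 1 + a n := by
    rw [abs_lt] at hn
    linarith
  rw [Real.exp_nat_mul, Real.exp_log hpos]

theorem pow_mul_geom_tendsto {r : ℝ} (h0 : 0 < r) (h1 : r < 1) (j : ℕ) :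
    Tendsto (fun n : ℕ => (n : ℝ) ^ j * r ^ (n - 1)) atTop (nhds 0) := by
  have hsum : Summable (fun n : ℕ => (n : ℝ) ^ j * r ^ n) := by
    have := summable_norm_pow_mul_geometric_of_norm_lt_one (R := ℝ) j
      (r := r) (by rw [Real.norm_eq_abs, abs_of_pos h0]; exact h1)
    exact this.of_norm
  have hbase : Tendsto (fun n : ℕ => (n : ℝ) ^ j * r ^ n) atTop (nhds 0) :=
    hsum.tendsto_atTop_zero
  have hconst : Tendsto (fun n : ℕ => r⁻¹ * ((n : ℝ) ^ j * r ^ n)) atTop (nhds 0) := by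
    have := hbase.const_mul r⁻¹
    simpa using this
  refine hconst.congr' ?_
  filter_upwards [eventually_ge_atTop 1] with n hn
  have hr : r ^ (n - 1) * r = r ^ n := by
    rw [← pow_succ]
    congr 1
    omega
  rw [← hr]
  have hrne : r ≠ 0 := ne_of_gt h0
  field_simp

theorem shift_iter (k : ℕ) (x : X) (j : ℤ) : (shift^[k] x) j = x (j + k) := by
  induction k generalizing x with
  | zero => simp
  | succ k ih =>
    rw [Function.iterate_succ_apply]
    rw [ih (shift x)]
    show x (j + k + 1) = x (j + (k + 1 : ℕ))
    congr 1
    push_cast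
    ring

theorem mem_shift_U (n k : ℕ) (x : X) :
    shift^[k] x ∈ {y : X | y 0 = 0 ∧ ∀ i : ℕ, 1 ≤ i → i ≤ n - 1 →
      (y (i : ℤ) = 1 ∨ y (i : ℤ) = 2)} ↔ x ∈ Aset n k := by
  simp only [Set.mem_setOf_eq, Aset, shift_iter]
  constructor
  · rintro ⟨h0, h⟩
    constructor
    · rw [zero_add] at h0; exact h0
    · intro i h1 h2
      have hc : ((k + i : ℕ) : ℤ) = (i : ℤ) + (k : ℤ) := by push_cast; ring
      rw [hc]
      exact h i h1 h2
  · rintro ⟨h0, h⟩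
    constructor
    · rw [zero_add]; exact h0
    · intro i h1 h2
      have hc : ((k + i : ℕ) : ℤ) = (i : ℤ) + (k : ℤ) := by push_cast; ring
      rw [← hc]
      exact h i h1 h2

end BAux

/-- Example 3.1 of the paper: exponential entry-time law for the Bernoulli measure on
`{0,1,2}^ℤ` and the sets `𝒰_n = {x : x₀ = 0, x_i ∈ {1,2} for 1 ≤ i ≤ n−1}`. -/
theorem bernoulli_example
    (μ : Measure (FullShift 3)) [IsProbabilityMeasure μ]
    (p : Fin 3 → ℝ) (hp : ∀ j, p j ∈ Set.Ioo (0 : ℝ) 1)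
    (hsum : p 0 + p 1 + p 2 = 1)
    (hBernoulli : ∀ (s : Finset ℤ) (f : ℤ → Fin 3),
      (μ {x : FullShift 3 | ∀ i ∈ s, x i = f i}).toReal = ∏ i ∈ s, p (f i))
    (U : ℕ → Set (FullShift 3))
    (hUdef : ∀ n : ℕ, U n =
      {x : FullShift 3 | x 0 = 0 ∧
        ∀ i : ℕ, 1 ≤ i → i ≤ n - 1 → (x (i : ℤ) = 1 ∨ x (i : ℤ) = 2)}) :
    ∀ t : ℝ, 0 < t →
      Tendsto
        (fun n : ℕ =>
          (μ {x : FullShift 3 |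
            ENNReal.ofReal t ≤ μ (U n) * (entryTime (U n) x : ℝ≥0∞)}).toReal)
        atTop (nhds (Real.exp (-t))) := by
  intro t ht
  have hp0 := hp 0
  have hsp0 : 0 < p 1 + p 2 := by have := (hp 1).1; have := (hp 2).1; linarith
  have hsp1 : p 1 + p 2 < 1 := by linarith [hp0.1]
  -- the measure of U n
  set qf : ℕ → ℝ := fun n => p 0 * (p 1 + p 2) ^ (n - 1) with hqf
  have hqpos : ∀ n, 0 < qf n := fun n => mul_pos hp0.1 (pow_pos hsp0 _)
  -- U n = Aset n 0
  have hUA : ∀ n, U n = BAux.Aset n 0 := by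
    intro n
    rw [hUdef n]
    ext x
    simp only [BAux.Aset, Set.mem_setOf_eq, Nat.cast_zero, Nat.zero_add]
  have hUn_meas : ∀ n, 1 ≤ n → (μ (U n)).toReal = qf n := by
    intro n hn
    rw [hUA n]
    exact BAux.Aset_measure μ p hBernoulli hn 0
  have hμU : ∀ n, 1 ≤ n → μ (U n) = ENNReal.ofReal (qf n) := by
    intro n hn
    rw [← ENNReal.ofReal_toReal (measure_ne_top μ (U n)), hUn_meas n hn]
  -- the sets
  set K : ℕ → ℕ := fun n => ⌈t / qf n⌉₊ with hK
  set R : ℕ → ℕ := fun n => K n - 1 with hR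
  have hK1 : ∀ n, 1 ≤ K n := by
    intro n
    exact Nat.one_le_iff_ne_zero.mpr (Nat.ceil_pos.mpr (div_pos ht (hqpos n))).ne'
  -- event identification
  have hevent : ∀ n, 1 ≤ n →
      {x : FullShift 3 | ENNReal.ofReal t ≤ μ (U n) * (entryTime (U n) x : ℝ≥0∞)} =
      BAux.GG n (Finset.Icc 1 (R n)) := by
    intro n hn
    ext x
    simp only [Set.mem_setOf_eq, BAux.GG, Set.mem_iInter, Finset.mem_Icc,
      Set.mem_compl_iff]
    rw [hμU n hn]
    constructor
    · intro hle k hk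
      intro hxA
      have hSk : k ∈ {k : ℕ | 1 ≤ k ∧ shift^[k] x ∈ U n} := by
        refine ⟨hk.1, ?_⟩
        rw [hUdef n]
        exact (BAux.mem_shift_U n k x).mpr hxA
      have hτ : entryTime (U n) x ≤ (k : ℕ∞) := iInf₂_le k hSk
      have hτ' : (entryTime (U n) x : ℝ≥0∞) ≤ ((k : ℕ∞) : ℝ≥0∞) :=
        ENat.toENNReal_le.mpr hτ
      rw [ENat.toENNReal_coe] at hτ'
      have hchain : ENNReal.ofReal t ≤ ENNReal.ofReal (qf n * k) := by
        calc ENNReal.ofReal t ≤ ENNReal.ofReal (qf n) * (entryTime (U n) x : ℝ≥0∞) := hle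
          _ ≤ ENNReal.ofReal (qf n) * (k : ℝ≥0∞) := mul_le_mul_right hτ' _
          _ = ENNReal.ofReal (qf n * k) := by
              rw [ENNReal.ofReal_mul (hqpos n).le, ENNReal.ofReal_natCast]
      have htle : t ≤ qf n * k :=
        (ENNReal.ofReal_le_ofReal_iff (mul_nonneg (hqpos n).le (Nat.cast_nonneg _))).mp hchain
      -- but k ≤ K n - 1 gives qf n * k < t
      have hkK : (k : ℝ) + 1 ≤ (K n : ℝ) := by
        have hRK : R n = K n - 1 := rfl
        have hK1' := hK1 n
        have : k + 1 ≤ K n := by omega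
        exact_mod_cast this
      have hceil : (K n : ℝ) < t / qf n + 1 :=
        Nat.ceil_lt_add_one (div_pos ht (hqpos n)).le
      have hklt : (k : ℝ) < t / qf n := by linarith
      have : qf n * k < t := by
        rw [mul_comm]
        exact (lt_div_iff₀ (hqpos n)).mp hklt
      linarith
    · intro hGG
      have hτ : (K n : ℕ∞) ≤ entryTime (U n) x := by
        refine le_iInf₂ (fun k hk => ?_)
        have hk1 : 1 ≤ k := hk.1
        have hkU : shift^[k] x ∈ U n := hk.2
        have hxA : x ∈ BAux.Aset n k := by
          rw [hUdef n] at hkU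
          exact (BAux.mem_shift_U n k x).mp hkU
      -- k cannot be in [1, R n]
        have hknot : ¬(1 ≤ k ∧ k ≤ R n) := fun h => hGG k h hxA
        have hRK : R n = K n - 1 := rfl
        have hK1' := hK1 n
        have hkK : K n ≤ k := by omega
        exact_mod_cast hkK
      have hτ' : ((K n : ℕ∞) : ℝ≥0∞) ≤ (entryTime (U n) x : ℝ≥0∞) :=
        ENat.toENNReal_le.mpr hτ
      rw [ENat.toENNReal_coe] at hτ'
      have htqK : t ≤ qf n * K n := by
        have h1 : t / qf n ≤ (K n : ℝ) := Nat.le_ceil _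
        have := (div_le_iff₀ (hqpos n)).mp h1
        linarith
      calc ENNReal.ofReal t ≤ ENNReal.ofReal (qf n * K n) :=
            ENNReal.ofReal_le_ofReal htqK
        _ = ENNReal.ofReal (qf n) * (K n : ℝ≥0∞) := by
            rw [ENNReal.ofReal_mul (hqpos n).le, ENNReal.ofReal_natCast]
        _ ≤ ENNReal.ofReal (qf n) * (entryTime (U n) x : ℝ≥0∞) :=
            mul_le_mul_right hτ' _
  -- asymptotics
  have hgeom : ∀ j : ℕ, Tendsto (fun n : ℕ => p 0 * ((n : ℝ) ^ j * (p 1 + p 2) ^ (n - 1)))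
      atTop (nhds 0) := by
    intro j
    have := (BAux.pow_mul_geom_tendsto hsp0 hsp1 j).const_mul (p 0)
    simpa using this
  have hq0 : Tendsto qf atTop (nhds 0) := by
    refine (hgeom 0).congr (fun n => ?_)
    simp [hqf]
  set aL : ℕ → ℝ := fun n => ((n ^ 2 : ℕ) : ℝ) * qf n with haL
  have ha0 : Tendsto aL atTop (nhds 0) := by
    refine (hgeom 2).congr (fun n => ?_)
    simp only [haL, hqf]
    push_cast
    ring
  have hnq : Tendsto (fun n : ℕ => (n : ℝ) * qf n) atTop (nhds 0) := by
    refine (hgeom 1).congr (fun n => ?_)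
    simp only [hqf]
    push_cast
    ring
  set m1 : ℕ → ℕ := fun n => R n / (n ^ 2 + n) with hm1
  -- basic numeric facts, ∀ n ≥ 1
  have hRle : ∀ n, (R n : ℝ) * qf n ≤ t := by
    intro n
    have hceil : (K n : ℝ) < t / qf n + 1 :=
      Nat.ceil_lt_add_one (div_pos ht (hqpos n)).le
    have hcast : (R n : ℝ) = (K n : ℝ) - 1 := by
      have := hK1 n
      rw [hR]
      push_cast [Nat.cast_sub this]
      ring
    have hRle' : (R n : ℝ) ≤ t / qf n := by rw [hcast]; linarith
    calc (R n : ℝ) * qf n ≤ (t / qf n) * qf n :=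
          mul_le_mul_of_nonneg_right hRle' (hqpos n).le
      _ = t := div_mul_cancel₀ t (hqpos n).ne'
  have hRge : ∀ n, t - qf n ≤ (R n : ℝ) * qf n := by
    intro n
    have h1 : t / qf n ≤ (K n : ℝ) := Nat.le_ceil _
    have hcast : (R n : ℝ) = (K n : ℝ) - 1 := by
      have := hK1 n
      rw [hR]
      push_cast [Nat.cast_sub this]
      ring
    have h2 : t / qf n - 1 ≤ (R n : ℝ) := by rw [hcast]; linarith
    have h3 : (t / qf n - 1) * qf n ≤ (R n : ℝ) * qf n :=
      mul_le_mul_of_nonneg_right h2 (hqpos n).le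
    calc t - qf n = (t / qf n - 1) * qf n := by
          rw [sub_mul, div_mul_cancel₀ _ (hqpos n).ne', one_mul]
      _ ≤ (R n : ℝ) * qf n := h3
  have hRq : Tendsto (fun n : ℕ => (R n : ℝ) * qf n) atTop (nhds t) := by
    refine tendsto_of_tendsto_of_tendsto_of_le_of_le'
      (g := fun n : ℕ => t - qf n) (h := fun _ => t) ?_ tendsto_const_nhds
      (Eventually.of_forall hRge) (Eventually.of_forall hRle)
    have h : Tendsto (fun n : ℕ => t - qf n) atTop (nhds (t - 0)) :=
      tendsto_const_nhds.sub hq0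
    simpa using h
  -- division facts
  have hnat1 : ∀ n, m1 n * (n ^ 2 + n) ≤ R n := fun n => Nat.div_mul_le_self _ _
  have hnat2 : ∀ n, 1 ≤ n → R n < (m1 n + 1) * (n ^ 2 + n) := by
    intro n hn
    have hpos : 0 < n ^ 2 + n := by positivity
    have hdm : (n ^ 2 + n) * (m1 n) + R n % (n ^ 2 + n) = R n := Nat.div_add_mod _ _
    have hmod : R n % (n ^ 2 + n) < n ^ 2 + n := Nat.mod_lt _ hpos
    calc R n = (n ^ 2 + n) * m1 n + R n % (n ^ 2 + n) := hdm.symm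
      _ < (n ^ 2 + n) * m1 n + (n ^ 2 + n) := by omega
      _ = (m1 n + 1) * (n ^ 2 + n) := by ring
  set e1 : ℕ → ℝ := fun n => (m1 n : ℝ) * ((n : ℝ) * qf n) with he1def
  have he1nonneg : ∀ n, 0 ≤ e1 n :=
    fun n => mul_nonneg (Nat.cast_nonneg _) (mul_nonneg (Nat.cast_nonneg _) (hqpos n).le)
  have he1le : ∀ n, 1 ≤ n → e1 n ≤ t / n := by
    intro n hn
    have h1 : (m1 n : ℝ) * ((n : ℝ) ^ 2 + n) ≤ (R n : ℝ) := by
      exact_mod_cast hnat1 n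
    have hn1 : (1 : ℝ) ≤ (n : ℝ) := by exact_mod_cast hn
    have hq := (hqpos n).le
    -- e1 * n = m1 * n^2 * q ≤ m1 (n^2+n) q ≤ R q ≤ t
    have h2 : e1 n * n ≤ t := by
      have hstep : (m1 n : ℝ) * (n : ℝ) ^ 2 ≤ (R n : ℝ) := by nlinarith [Nat.cast_nonneg (α := ℝ) (m1 n)]
      have : e1 n * n = ((m1 n : ℝ) * (n : ℝ) ^ 2) * qf n := by
        simp only [he1def]; ring
      rw [this]
      calc ((m1 n : ℝ) * (n : ℝ) ^ 2) * qf n ≤ (R n : ℝ) * qf n :=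
            mul_le_mul_of_nonneg_right hstep hq
        _ ≤ t := hRle n
    rw [le_div_iff₀ (by linarith : (0:ℝ) < (n:ℝ))]
    exact h2
  have he1 : Tendsto e1 atTop (nhds 0) := by
    refine tendsto_of_tendsto_of_tendsto_of_le_of_le'
      (g := fun _ => (0 : ℝ)) (h := fun n : ℕ => t / n) tendsto_const_nhds
      (tendsto_const_div_atTop_nhds_zero_nat t) ?_ ?_
    · exact Eventually.of_forall he1nonneg
    · filter_upwards [eventually_ge_atTop 1] with n hn
      exact he1le n hn
  -- b := m1 * aL tends to t
  set b : ℕ → ℝ := fun n => (m1 n : ℝ) * aL n with hbdef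
  have hble : ∀ n, b n ≤ t := by
    intro n
    have h1 : (m1 n : ℝ) * ((n : ℝ) ^ 2 + n) ≤ (R n : ℝ) := by
      exact_mod_cast hnat1 n
    have hq := (hqpos n).le
    have hm1nn : (0:ℝ) ≤ (m1 n : ℝ) := Nat.cast_nonneg _
    have hnn : (0:ℝ) ≤ (n : ℝ) := Nat.cast_nonneg _
    have h2 : (m1 n : ℝ) * ((n : ℝ) ^ 2) ≤ (R n : ℝ) := by nlinarith
    have h3 : b n = ((m1 n : ℝ) * (n : ℝ) ^ 2) * qf n := by
      simp only [hbdef, haL]; push_cast; ring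
    rw [h3]
    calc ((m1 n : ℝ) * (n : ℝ) ^ 2) * qf n ≤ (R n : ℝ) * qf n :=
          mul_le_mul_of_nonneg_right h2 hq
      _ ≤ t := hRle n
  have hbge : ∀ n, 1 ≤ n →
      (R n : ℝ) * qf n - e1 n - (aL n + (n : ℝ) * qf n) ≤ b n := by
    intro n hn
    have h1 : (R n : ℝ) ≤ ((m1 n : ℝ) + 1) * ((n : ℝ) ^ 2 + n) := by
      exact_mod_cast (hnat2 n hn).le
    have hq := (hqpos n).le
    have h2 : (R n : ℝ) * qf n ≤ (((m1 n : ℝ) + 1) * ((n : ℝ) ^ 2 + n)) * qf n :=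
      mul_le_mul_of_nonneg_right h1 hq
    have h3 : (((m1 n : ℝ) + 1) * ((n : ℝ) ^ 2 + n)) * qf n
        = b n + e1 n + (aL n + (n : ℝ) * qf n) := by
      simp only [hbdef, he1def, haL]; push_cast; ring
    linarith
  have hb : Tendsto b atTop (nhds t) := by
    refine tendsto_of_tendsto_of_tendsto_of_le_of_le'
      (g := fun n : ℕ => (R n : ℝ) * qf n - e1 n - (aL n + (n : ℝ) * qf n))
      (h := fun _ => t) ?_ tendsto_const_nhds ?_ (Eventually.of_forall hble)
    · have h : Tendsto (fun n : ℕ => (R n : ℝ) * qf n - e1 n - (aL n + (n : ℝ) * qf n))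
          atTop (nhds (t - 0 - (0 + 0))) := (hRq.sub he1).sub (ha0.add hnq)
      simpa using h
    · filter_upwards [eventually_ge_atTop 1] with n hn
      exact hbge n hn
  -- limits of the bounding sequences
  have hupperlim : Tendsto (fun n => (1 - aL n + aL n ^ 2) ^ (m1 n)) atTop
      (nhds (Real.exp (-t))) := by
    have h := BAux.pow_tendsto_exp (fun n => -aL n + aL n ^ 2) m1 (-t) (by linarith)
      ?_ ?_
    · refine h.congr (fun n => ?_)
      congr 1
      ring
    · have : Tendsto (fun n => -aL n + aL n ^ 2) atTop (nhds (-0 + 0 ^ 2)) :=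
        ha0.neg.add (ha0.pow 2)
      simpa using this
    · have : Tendsto (fun n => -b n + b n * aL n) atTop (nhds (-t + t * 0)) :=
        hb.neg.add (hb.mul ha0)
      rw [mul_zero, add_zero] at this
      refine this.congr (fun n => ?_)
      simp only [hbdef]
      ring
  have hm2cast : ∀ n, ((m1 n + 1 : ℕ) : ℝ) = (m1 n : ℝ) + 1 := by
    intro n; push_cast; ring
  have hlowerlim : Tendsto
      (fun n => (1 - aL n) ^ (m1 n + 1) - ((m1 n + 1 : ℕ) : ℝ) * ((n : ℝ) * qf n))
      atTop (nhds (Real.exp (-t))) := by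
    have hpart1 : Tendsto (fun n => (1 - aL n) ^ (m1 n + 1)) atTop
        (nhds (Real.exp (-t))) := by
      have h := BAux.pow_tendsto_exp (fun n => -aL n) (fun n => m1 n + 1) (-t)
        (by linarith) ?_ ?_
      · refine h.congr (fun n => ?_)
        congr 1
      · simpa using ha0.neg
      · have : Tendsto (fun n => -(b n) - aL n) atTop (nhds (-t - 0)) := hb.neg.sub ha0
        rw [sub_zero] at this
        refine this.congr (fun n => ?_)
        rw [hm2cast n]
        simp only [hbdef]
        ring
    have hpart2 : Tendsto (fun n => ((m1 n + 1 : ℕ) : ℝ) * ((n : ℝ) * qf n)) atTop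
        (nhds 0) := by
      have : Tendsto (fun n => e1 n + (n : ℝ) * qf n) atTop (nhds (0 + 0)) :=
        he1.add hnq
      rw [add_zero] at this
      refine this.congr (fun n => ?_)
      rw [hm2cast n]
      simp only [he1def]
      ring
    have := hpart1.sub hpart2
    simpa using this
  -- final squeeze
  refine tendsto_of_tendsto_of_tendsto_of_le_of_le'
    (g := fun n : ℕ => (1 - aL n) ^ (m1 n + 1) - ((m1 n + 1 : ℕ) : ℝ) * ((n : ℝ) * qf n))
    (h := fun n : ℕ => (1 - aL n + aL n ^ 2) ^ (m1 n))
    hlowerlim hupperlim ?_ ?_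
  · filter_upwards [eventually_ge_atTop 1,
      ha0.eventually_lt_const (by norm_num : (0:ℝ) < 1)] with n hn haLn
    rw [hevent n hn]
    have hsand := BAux.sandwich μ p hp hBernoulli hn (n ^ 2) (R n) haLn.le
    have := hsand.1
    convert this using 2
  · filter_upwards [eventually_ge_atTop 1,
      ha0.eventually_lt_const (by norm_num : (0:ℝ) < 1)] with n hn haLn
    rw [hevent n hn]
    have hsand := BAux.sandwich μ p hp hBernoulli hn (n ^ 2) (R n) haLn.le
    have := hsand.2
    convert this using 2
end
end
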